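/- arXiv:1108.3638 — 5 statements merged into one kernel-verified Lean document; each statement's English description precedes it below -/
import Mathlib

section
/- Let (P, ≤, s) be a word poset over alphabet S with commutation relation R, and let e : P → {1,...,m} be a linear extension (an order-preserving bijection, where m = |P|). Define the word w(e) by w(e)_i = s(e⁻¹(i)). Then for any two linear extensions e, e' of P, the words w(e) and w(e') lie in the same commutation class. -/
def SwapStep {S : Type*} (R : S → S → Prop) (u v : List S) : Prop :=
  ∃ (x y : List S) (a b : S), R a b ∧ u = x ++ a :: b :: y ∧ v = x ++ b :: a :: y

def CommEquiv {S : Type*} (R : S → S → Prop) : List S → List S → Prop :=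
  Relation.ReflTransGen (SwapStep R)

/-- `(P, s)` is a word poset over alphabet `S` with commutation relation `R`:
(a) elements with equal or non-commuting labels are comparable;
(b) labels of elements in a covering relation are equal or do not commute. -/
def IsWordPoset {S : Type*} (R : S → S → Prop) {P : Type*} [PartialOrder P]
    (s : P → S) : Prop :=
  (∀ x y : P, (s x = s y ∨ ¬ R (s x) (s y)) → x ≤ y ∨ y ≤ x) ∧
  (∀ x y : P, x ⋖ y → s x = s y ∨ ¬ R (s x) (s y))

theorem commEquiv_append_left {S : Type*} (R : S → S → Prop) (w : List S) {u v : List S}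
    (h : CommEquiv R u v) : CommEquiv R (w ++ u) (w ++ v) := by
  refine Relation.ReflTransGen.lift (w ++ ·) ?_ _ _ h
  rintro a b ⟨x, y, c, d, hR, rfl, rfl⟩
  exact ⟨w ++ x, y, c, d, hR, by simp, by simp⟩

theorem commEquiv_append_right {S : Type*} (R : S → S → Prop) (w : List S) {u v : List S}
    (h : CommEquiv R u v) : CommEquiv R (u ++ w) (v ++ w) := by
  refine Relation.ReflTransGen.lift (· ++ w) ?_ _ _ h
  rintro a b ⟨x, y, c, d, hR, rfl, rfl⟩
  exact ⟨x, y ++ w, c, d, hR, by simp, by simp⟩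

theorem commEquiv_bubble {S : Type*} (R : S → S → Prop) (a : S) :
    ∀ (B : List S), (∀ b ∈ B, R a b) → CommEquiv R (a :: B) (B ++ [a]) := by
  intro B
  induction B with
  | nil => intro _; exact Relation.ReflTransGen.refl
  | cons c B ih =>
    intro h
    have step : SwapStep R (a :: c :: B) (c :: a :: B) :=
      ⟨[], B, a, c, h c (by simp), rfl, rfl⟩
    have tail : CommEquiv R (c :: (a :: B)) (c :: (B ++ [a])) :=
      commEquiv_append_left R [c] (ih (fun b hb => h b (by simp [hb])))
    exact Relation.ReflTransGen.trans (Relation.ReflTransGen.single step) tail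

theorem commEquiv_of_linExt {P : Type*} [PartialOrder P] :
    ∀ (L' L : List P), L.Pairwise (fun a b => ¬ b ≤ a) →
      L'.Pairwise (fun a b => ¬ b ≤ a) → L.Perm L' →
      CommEquiv (fun a b : P => ¬ a ≤ b ∧ ¬ b ≤ a) L L' := by
  intro L'
  induction L' using List.reverseRecOn with
  | nil =>
    intro L _ _ hperm
    rw [List.perm_nil.mp hperm]
    exact Relation.ReflTransGen.refl
  | append_singleton M' x ih =>
    intro L hL hL' hperm
    have hxL : x ∈ L := hperm.mem_iff.mpr (by simp)
    obtain ⟨A, B, rfl⟩ := List.append_of_mem hxL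
    -- pairwise facts
    have hxB : ∀ b ∈ B, ¬ b ≤ x := by
      have := (List.pairwise_append.mp hL).1
      exact fun b hb => ((List.pairwise_cons.mp ((List.pairwise_append.mp hL).2.1)).1 b hb)
    have hM'x : ∀ a ∈ M', ¬ x ≤ a := by
      have h := (List.pairwise_append.mp hL').2.2
      exact fun a ha => h a ha x (by simp)
    have hxB' : ∀ b ∈ B, ¬ x ≤ b := by
      intro b hb
      have hbne : b ≠ x := fun h => hxB b hb (h ▸ le_refl x)
      have hbL' : b ∈ M' ++ [x] := hperm.mem_iff.mp (by simp [hb])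
      have hbM' : b ∈ M' := by
        rcases List.mem_append.mp hbL' with h | h
        · exact h
        · exact absurd (List.mem_singleton.mp h) hbne
      exact hM'x b hbM'
    -- bubble x to the end
    have bub : CommEquiv (fun a b : P => ¬ a ≤ b ∧ ¬ b ≤ a) (x :: B) (B ++ [x]) :=
      commEquiv_bubble _ x B (fun b hb => ⟨hxB' b hb, hxB b hb⟩)
    have step1 : CommEquiv (fun a b : P => ¬ a ≤ b ∧ ¬ b ≤ a)
        (A ++ x :: B) (A ++ (B ++ [x])) := commEquiv_append_left _ A bub
    -- induction on the rest
    have hAB : (A ++ B).Pairwise (fun a b => ¬ b ≤ a) := by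
      refine hL.sublist ?_
      exact (List.sublist_cons_self x B).append_left A
    have hM' : M'.Pairwise (fun a b => ¬ b ≤ a) :=
      hL'.sublist (List.sublist_append_left M' [x])
    have hpermAB : (A ++ B).Perm M' := by
      have h1 : (A ++ x :: B).Perm (x :: (A ++ B)) := List.perm_middle
      have h2 : (M' ++ [x]).Perm (x :: M') := List.perm_append_singleton x M'
      exact (List.perm_cons x).mp (h1.symm.trans (hperm.trans h2))
    have step2 : CommEquiv (fun a b : P => ¬ a ≤ b ∧ ¬ b ≤ a)
        (A ++ B ++ [x]) (M' ++ [x]) := commEquiv_append_right _ [x] (ih (A ++ B) hAB hM' hpermAB)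
    rw [← List.append_assoc] at step1
    exact Relation.ReflTransGen.trans step1 step2

theorem commEquiv_map {S P : Type*} (R : S → S → Prop) (Q : P → P → Prop) (s : P → S)
    (hQR : ∀ a b, Q a b → R (s a) (s b)) {u v : List P} (h : CommEquiv Q u v) :
    CommEquiv R (u.map s) (v.map s) := by
  refine Relation.ReflTransGen.lift (List.map s) ?_ _ _ h
  rintro a b ⟨x, y, c, d, hR, rfl, rfl⟩
  exact ⟨x.map s, y.map s, s c, s d, hQR c d hR, by simp, by simp⟩

theorem stmt1 {S : Type*} (R : S → S → Prop) {P : Type*} [PartialOrder P] [Fintype P]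
    {m : ℕ} (hm : Fintype.card P = m) (s : P → S) (hwp : IsWordPoset R s)
    (e e' : P ≃ Fin m) (he : Monotone ⇑e) (he' : Monotone ⇑e') :
    CommEquiv R (List.ofFn fun i => s (e.symm i)) (List.ofFn fun i => s (e'.symm i)) := by
  classical
  have hmap : ∀ (f : Fin m → P), (List.ofFn fun i => s (f i)) = (List.ofFn f).map s := by
    intro f; rw [List.map_ofFn]; rfl
  rw [hmap e.symm, hmap e'.symm]
  have hQR : ∀ a b : P, (¬ a ≤ b ∧ ¬ b ≤ a) → R (s a) (s b) := by
    intro a b ⟨h1, h2⟩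
    by_contra hR
    rcases hwp.1 a b (Or.inr hR) with h | h
    · exact h1 h
    · exact h2 h
  refine commEquiv_map R _ s hQR ?_
  have hpw : ∀ (f : P ≃ Fin m), Monotone ⇑f →
      (List.ofFn f.symm).Pairwise (fun a b => ¬ b ≤ a) := by
    intro f hf
    rw [List.pairwise_ofFn]
    intro i j hij hle
    have := hf hle
    simp only [Equiv.apply_symm_apply] at this
    exact absurd (lt_of_lt_of_le hij this) (lt_irrefl i)
  have hperm : (List.ofFn e.symm).Perm (List.ofFn e'.symm) := by
    apply List.perm_of_nodup_nodup_toFinset_eq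
    · exact List.nodup_ofFn.mpr e.symm.injective
    · exact List.nodup_ofFn.mpr e'.symm.injective
    · apply Finset.eq_of_subset_of_card_le
      · intro p hp
        simp only [List.mem_toFinset, List.mem_ofFn] at *
        exact ⟨e' p, by simp⟩
      · apply le_of_eq
        rw [List.toFinset_card_of_nodup (List.nodup_ofFn.mpr e.symm.injective),
            List.toFinset_card_of_nodup (List.nodup_ofFn.mpr e'.symm.injective)]
        simp
  exact commEquiv_of_linExt _ _ (hpw e he) (hpw e' he') hperm
end

section
/- Let (P, ≤, s) be a word poset with m elements and let w be the word obtained from some linear extension of P. Then the map sending a linear extension e of P to the word w(e) given by w(e)_i = s(e⁻¹(i)) is a bijection from the set of linear extensions of P onto the commutation class of w. -/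
set_option linter.unusedSectionVars false
set_option maxHeartbeats 1000000

section Aux

variable {S : Type*} {R : S → S → Prop} {P : Type*} [PartialOrder P] [Fintype P] {m : ℕ}
  {s : P → S}

def wd (s : P → S) (e : P ≃ Fin m) : List S := List.ofFn fun i => s (e.symm i)

@[simp] lemma wd_length (s : P → S) (e : P ≃ Fin m) : (wd s e).length = m := by
  simp [wd]

lemma wd_getElem (s : P → S) (e : P ≃ Fin m) (k : ℕ) (h : k < m) :
    (wd s e)[k]'(by simpa using h) = s (e.symm ⟨k, h⟩) := by
  simp [wd]

lemma list_split {α : Type*} (l : List α) (n : ℕ) (h : n + 1 < l.length) :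
    l = l.take n ++ l[n] :: l[n+1]'h :: l.drop (n+2) := by
  conv_lhs => rw [← List.take_append_drop n l]
  congr 1
  rw [List.drop_eq_getElem_cons (by omega), List.drop_eq_getElem_cons (by omega)]

lemma append_swap_eq_set {α : Type*} (x y : List α) (a b : α) :
    x ++ b :: a :: y = ((x ++ a :: b :: y).set x.length b).set (x.length+1) a := by
  induction x with
  | nil => simp
  | cons h t ih => simpa using ih

lemma getElem_append_len {α : Type*} (x y : List α) (a : α) (h : x.length < (x ++ a :: y).length) :
    (x ++ a :: y)[x.length] = a := by
  rw [List.getElem_append_right (le_refl _)]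
  simp

lemma getElem_append_len2 {α : Type*} (x y : List α) (a b : α)
    (h : x.length + 1 < (x ++ a :: b :: y).length) :
    (x ++ a :: b :: y)[x.length + 1] = b := by
  induction x with
  | nil => simp
  | cons hd tl ih => simpa using ih (by simpa using h)

lemma wd_swap (s : P → S) (e : P ≃ Fin m) (i j : Fin m) :
    wd s (e.trans (Equiv.swap i j)) =
      ((wd s e).set i (s (e.symm j))).set j (s (e.symm i)) := by
  apply List.ext_getElem
  · simp [wd]
  intro k h1 h2
  have hk : k < m := by simpa using h1
  have L : (wd s (e.trans (Equiv.swap i j)))[k]'h1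
      = s (e.symm ((Equiv.swap i j) ⟨k, hk⟩)) := by
    simp [wd]
  rw [L]
  simp only [List.getElem_set]
  split_ifs with hj hi
  · rw [show (⟨k, hk⟩ : Fin m) = j from Fin.ext hj.symm, Equiv.swap_apply_right]
  · rw [show (⟨k, hk⟩ : Fin m) = i from Fin.ext hi.symm, Equiv.swap_apply_left]
  · rw [Equiv.swap_apply_of_ne_of_ne
      (fun h => hi (congrArg Fin.val h).symm) (fun h => hj (congrArg Fin.val h).symm)]
    exact (wd_getElem s e k hk).symm

lemma wd_swap' (s : P → S) (e : P ≃ Fin m) (i j : Fin m) (hj : (j : ℕ) = (i : ℕ) + 1) :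
    wd s (e.trans (Equiv.swap i j)) =
      (wd s e).take i ++ s (e.symm j) :: s (e.symm i) :: (wd s e).drop ((i : ℕ)+2) := by
  have him : (i : ℕ) + 1 < m := hj ▸ j.isLt
  have him' : (i : ℕ) + 1 < (wd s e).length := by simpa using him
  have hsp := list_split (wd s e) i him'
  have hA : (wd s e)[(i : ℕ)]'(by simpa using i.isLt) = s (e.symm i) := by
    rw [wd_getElem s e i i.isLt]
  have hB : (wd s e)[(i : ℕ)+1]'him' = s (e.symm j) := by
    rw [wd_getElem s e ((i : ℕ)+1) him]
    congr 1
    exact congrArg e.symm (Fin.ext hj.symm)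
  rw [hA, hB] at hsp
  have hlen : ((wd s e).take (i : ℕ)).length = (i : ℕ) := by
    simp
  have key := append_swap_eq_set ((wd s e).take (i : ℕ)) ((wd s e).drop ((i : ℕ)+2))
    (s (e.symm i)) (s (e.symm j))
  rw [hlen] at key
  rw [wd_swap s e i j, hj]
  conv_lhs => rw [hsp]
  exact key.symm

lemma swapStep_wd (s : P → S) (e : P ≃ Fin m) (i j : Fin m) (hj : (j : ℕ) = (i : ℕ) + 1)
    (hR : R (s (e.symm i)) (s (e.symm j))) :
    SwapStep R (wd s e) (wd s (e.trans (Equiv.swap i j))) := by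
  have him : (i : ℕ) + 1 < m := hj ▸ j.isLt
  have him' : (i : ℕ) + 1 < (wd s e).length := by simpa using him
  refine ⟨(wd s e).take i, (wd s e).drop ((i : ℕ)+2), s (e.symm i), s (e.symm j), hR, ?_, ?_⟩
  · have hsp := list_split (wd s e) i him'
    have hA : (wd s e)[(i : ℕ)]'(by simpa using i.isLt) = s (e.symm i) := by
      rw [wd_getElem s e i i.isLt]
    have hB : (wd s e)[(i : ℕ)+1]'him' = s (e.symm j) := by
      rw [wd_getElem s e ((i : ℕ)+1) him]
      congr 1
      exact congrArg e.symm (Fin.ext hj.symm)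
    rw [hA, hB] at hsp
    exact hsp
  · exact wd_swap' s e i j hj


lemma incomp_R (hwp : IsWordPoset R s) {x y : P} (h1 : ¬ x ≤ y) (h2 : ¬ y ≤ x) :
    R (s x) (s y) ∧ s x ≠ s y := by
  constructor
  · by_contra hr
    exact ((hwp.1 x y (Or.inr hr)).elim h1 h2)
  · intro hs
    exact ((hwp.1 x y (Or.inl hs)).elim h1 h2)

lemma mono_swap (e : P ≃ Fin m) (he : Monotone ⇑e) (i j : Fin m)
    (hj : (j : ℕ) = (i : ℕ) + 1)
    (h1 : ¬ e.symm i ≤ e.symm j) (h2 : ¬ e.symm j ≤ e.symm i) :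
    Monotone ⇑(e.trans (Equiv.swap i j)) := by
  intro u v huv
  rcases eq_or_ne u v with rfl | hne
  · exact le_refl _
  have hlt : e u < e v := (he.strictMono_of_injective e.injective) (lt_of_le_of_ne huv hne)
  simp only [Equiv.trans_apply]
  by_cases hui : u = e.symm i
  · have heu : e u = i := (Equiv.eq_symm_apply e).mp hui
    by_cases hvj : v = e.symm j
    · exact absurd (hui ▸ hvj ▸ huv) h1
    · have hvi : e v ≠ i := by
        rw [← heu]; exact fun h => hne (e.injective h.symm)
      have hvj' : e v ≠ j := fun h => hvj ((Equiv.eq_symm_apply e).mpr h)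
      rw [heu, Equiv.swap_apply_left, Equiv.swap_apply_of_ne_of_ne hvi hvj']
      rw [Fin.le_def]
      rw [Fin.lt_def, heu] at hlt
      have n1 : (e v : ℕ) ≠ i := fun h => hvi (Fin.ext h)
      have n2 : (e v : ℕ) ≠ j := fun h => hvj' (Fin.ext h)
      omega
  · by_cases huj : u = e.symm j
    · have heu : e u = j := (Equiv.eq_symm_apply e).mp huj
      have hvi : v ≠ e.symm i := by
        intro h
        have : e v = i := (Equiv.eq_symm_apply e).mp h
        rw [heu, this, Fin.lt_def] at hlt
        omega
      have hvj : v ≠ e.symm j := fun h => hne (h ▸ huj)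
      have n1 : e v ≠ i := fun h => hvi ((Equiv.eq_symm_apply e).mpr h)
      have n2 : e v ≠ j := fun h => hvj ((Equiv.eq_symm_apply e).mpr h)
      rw [heu, Equiv.swap_apply_right, Equiv.swap_apply_of_ne_of_ne n1 n2]
      rw [Fin.le_def]
      rw [Fin.lt_def, heu] at hlt
      omega
    · have n1 : e u ≠ i := fun h => hui ((Equiv.eq_symm_apply e).mpr h)
      have n2 : e u ≠ j := fun h => huj ((Equiv.eq_symm_apply e).mpr h)
      rw [Equiv.swap_apply_of_ne_of_ne n1 n2]
      by_cases hvi : v = e.symm i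
      · have hev : e v = i := (Equiv.eq_symm_apply e).mp hvi
        rw [hev, Equiv.swap_apply_left, Fin.le_def]
        rw [Fin.lt_def, hev] at hlt
        omega
      · by_cases hvj : v = e.symm j
        · have hev : e v = j := (Equiv.eq_symm_apply e).mp hvj
          rw [hev, Equiv.swap_apply_right, Fin.le_def]
          rw [Fin.lt_def, hev] at hlt
          have : (e u : ℕ) ≠ i := fun h => n1 (Fin.ext h)
          omega
        · have m1 : e v ≠ i := fun h => hvi ((Equiv.eq_symm_apply e).mpr h)
          have m2 : e v ≠ j := fun h => hvj ((Equiv.eq_symm_apply e).mpr h)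
          rw [Equiv.swap_apply_of_ne_of_ne m1 m2]
          exact le_of_lt hlt


noncomputable def invc (e e' : P ≃ Fin m) : ℕ :=
  (Finset.univ.filter fun p : P × P => e p.1 < e p.2 ∧ e' p.2 < e' p.1).card

lemma invc_self (e : P ≃ Fin m) : invc e e = 0 := by
  rw [invc, Finset.card_eq_zero, Finset.filter_eq_empty_iff]
  rintro ⟨u, v⟩ -
  simp only [not_and]
  intro h1 h2
  exact absurd h1 (lt_asymm h2)

lemma eq_of_strictMono (e e' : P ≃ Fin m) (hf : StrictMono ⇑(e.symm.trans e')) : e = e' := by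
  have hr : Set.range ⇑(e.symm.trans e') = Set.range (id : Fin m → Fin m) := by
    rw [Set.range_id, Set.range_eq_univ]
    exact (e.symm.trans e').surjective
  have hid : ⇑(e.symm.trans e') = id := (hf.range_inj strictMono_id).mp hr
  ext p
  have h2 : e' p = e p := by simpa using congrFun hid (e p)
  exact congrArg Fin.val h2.symm

lemma eq_of_invc_zero (e e' : P ≃ Fin m) (h : invc e e' = 0) : e = e' := by
  have hemp : ∀ u v : P, ¬(e u < e v ∧ e' v < e' u) := by
    intro u v huv
    have : (u, v) ∈ Finset.univ.filter fun p : P × P => e p.1 < e p.2 ∧ e' p.2 < e' p.1 := by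
      simp only [Finset.mem_filter, Finset.mem_univ, true_and]
      exact huv
    rw [invc, Finset.card_eq_zero] at h
    rw [h] at this
    exact absurd this (Finset.notMem_empty _)
  apply eq_of_strictMono
  intro a b hab
  simp only [Equiv.trans_apply]
  have h1 : e (e.symm a) < e (e.symm b) := by simpa using hab
  have h2 := hemp (e.symm a) (e.symm b)
  have hne : e' (e.symm a) ≠ e' (e.symm b) := by
    intro hh
    exact hab.ne (by simpa using congrArg (⇑e ∘ ⇑e'.symm) hh)
  rcases lt_or_ge (e' (e.symm a)) (e' (e.symm b)) with h | h
  · exact h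
  · exact absurd ⟨h1, lt_of_le_of_ne h hne.symm⟩ h2

lemma exists_adj (e e' : P ≃ Fin m) (h : invc e e' ≠ 0) :
    ∃ i j : Fin m, (j : ℕ) = (i : ℕ) + 1 ∧ e' (e.symm j) < e' (e.symm i) := by
  by_contra hc
  push_neg at hc
  apply h
  have heq : e = e' := by
    apply eq_of_strictMono
    rcases Nat.eq_zero_or_pos m with rfl | hm
    · intro a; exact absurd a.pos (by omega)
    obtain ⟨n, rfl⟩ : ∃ n, m = n + 1 := ⟨m - 1, by omega⟩
    rw [Fin.strictMono_iff_lt_succ]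
    intro i
    have hadj : ((i.succ : Fin (n+1)) : ℕ) = ((i.castSucc : Fin (n+1)) : ℕ) + 1 := by simp
    have := hc i.castSucc i.succ hadj
    simp only [Equiv.trans_apply]
    have hne : e' (e.symm i.castSucc) ≠ e' (e.symm i.succ) := by
      intro hh
      have : (i.castSucc : Fin (n+1)) = i.succ := by
        simpa using congrArg (⇑e ∘ ⇑e'.symm) hh
      rw [Fin.ext_iff] at this
      omega
    exact lt_of_le_of_ne this hne
  rw [heq]
  exact invc_self e'

lemma key_iff (e e' : P ≃ Fin m) (i j : Fin m) (hj : (j : ℕ) = (i : ℕ) + 1)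
    (hinv : e' (e.symm j) < e' (e.symm i)) (u v : P) :
    ((e.trans (Equiv.swap i j)) u < (e.trans (Equiv.swap i j)) v ∧ e' v < e' u)
      ↔ (¬(u = e.symm i ∧ v = e.symm j) ∧ (e u < e v ∧ e' v < e' u)) := by
  rcases eq_or_ne u v with rfl | huv
  · simp
  simp only [Equiv.trans_apply]
  by_cases hux : u = e.symm i
  · have heu : e u = i := (Equiv.eq_symm_apply e).mp hux
    by_cases hvy : v = e.symm j
    · have hev : e v = j := (Equiv.eq_symm_apply e).mp hvy
      rw [heu, hev, Equiv.swap_apply_left, Equiv.swap_apply_right]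
      constructor
      · rintro ⟨h, -⟩
        rw [Fin.lt_def] at h
        omega
      · rintro ⟨hne, -, -⟩
        exact absurd ⟨hux, hvy⟩ hne
    · have hvx : v ≠ e.symm i := fun h => huv (hux.trans h.symm)
      have n1 : e v ≠ i := fun h => hvx ((Equiv.eq_symm_apply e).mpr h)
      have n2 : e v ≠ j := fun h => hvy ((Equiv.eq_symm_apply e).mpr h)
      have n1' : (e v : ℕ) ≠ (i : ℕ) := fun h => n1 (Fin.ext h)
      have n2' : (e v : ℕ) ≠ (j : ℕ) := fun h => n2 (Fin.ext h)
      rw [heu, Equiv.swap_apply_left, Equiv.swap_apply_of_ne_of_ne n1 n2]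
      have harith : j < e v ↔ i < e v := by
        rw [Fin.lt_def, Fin.lt_def]; omega
      rw [harith]
      simp [hvy]
  · by_cases huy : u = e.symm j
    · have heu : e u = j := (Equiv.eq_symm_apply e).mp huy
      by_cases hvx : v = e.symm i
      · have hev : e v = i := (Equiv.eq_symm_apply e).mp hvx
        rw [heu, hev, Equiv.swap_apply_left, Equiv.swap_apply_right, huy, hvx]
        constructor
        · rintro ⟨-, h⟩
          exact absurd h (lt_asymm hinv)
        · rintro ⟨-, h, -⟩
          rw [Fin.lt_def] at h
          omega
      · have hvy : v ≠ e.symm j := fun h => huv (huy.trans h.symm)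
        have n1 : e v ≠ i := fun h => hvx ((Equiv.eq_symm_apply e).mpr h)
        have n2 : e v ≠ j := fun h => hvy ((Equiv.eq_symm_apply e).mpr h)
        have n1' : (e v : ℕ) ≠ (i : ℕ) := fun h => n1 (Fin.ext h)
        have n2' : (e v : ℕ) ≠ (j : ℕ) := fun h => n2 (Fin.ext h)
        rw [heu, Equiv.swap_apply_right, Equiv.swap_apply_of_ne_of_ne n1 n2]
        have harith : i < e v ↔ j < e v := by
          rw [Fin.lt_def, Fin.lt_def]; omega
        rw [harith]
        simp [hux]
    · have n1 : e u ≠ i := fun h => hux ((Equiv.eq_symm_apply e).mpr h)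
      have n2 : e u ≠ j := fun h => huy ((Equiv.eq_symm_apply e).mpr h)
      have n1' : (e u : ℕ) ≠ (i : ℕ) := fun h => n1 (Fin.ext h)
      have n2' : (e u : ℕ) ≠ (j : ℕ) := fun h => n2 (Fin.ext h)
      rw [Equiv.swap_apply_of_ne_of_ne n1 n2]
      by_cases hvx : v = e.symm i
      · have hev : e v = i := (Equiv.eq_symm_apply e).mp hvx
        rw [hev, Equiv.swap_apply_left]
        have harith : e u < j ↔ e u < i := by
          rw [Fin.lt_def, Fin.lt_def]; omega
        rw [harith]
        simp [hux]
      · by_cases hvy : v = e.symm j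
        · have hev : e v = j := (Equiv.eq_symm_apply e).mp hvy
          rw [hev, Equiv.swap_apply_right]
          have harith : e u < i ↔ e u < j := by
            rw [Fin.lt_def, Fin.lt_def]; omega
          rw [harith]
          simp [hux]
        · have m1 : e v ≠ i := fun h => hvx ((Equiv.eq_symm_apply e).mpr h)
          have m2 : e v ≠ j := fun h => hvy ((Equiv.eq_symm_apply e).mpr h)
          rw [Equiv.swap_apply_of_ne_of_ne m1 m2]
          simp [hux]

lemma invc_swap (e e' : P ≃ Fin m) (i j : Fin m) (hj : (j : ℕ) = (i : ℕ) + 1)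
    (hinv : e' (e.symm j) < e' (e.symm i)) :
    invc (e.trans (Equiv.swap i j)) e' + 1 = invc e e' := by
  classical
  have hmem : (e.symm i, e.symm j) ∈
      Finset.univ.filter fun p : P × P => e p.1 < e p.2 ∧ e' p.2 < e' p.1 := by
    simp only [Finset.mem_filter, Finset.mem_univ, true_and]
    refine ⟨?_, hinv⟩
    simp only [Equiv.apply_symm_apply]
    rw [Fin.lt_def]
    omega
  have hfil : (Finset.univ.filter fun p : P × P =>
        (e.trans (Equiv.swap i j)) p.1 < (e.trans (Equiv.swap i j)) p.2 ∧ e' p.2 < e' p.1)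
      = (Finset.univ.filter fun p : P × P =>
          e p.1 < e p.2 ∧ e' p.2 < e' p.1).erase (e.symm i, e.symm j) := by
    ext ⟨u, v⟩
    simp only [Finset.mem_filter, Finset.mem_univ, true_and, Finset.mem_erase]
    rw [key_iff e e' i j hj hinv u v, Ne, Prod.mk.injEq]
  rw [invc, invc, hfil, Finset.card_erase_of_mem hmem]
  have : 0 < (Finset.univ.filter fun p : P × P =>
      e p.1 < e p.2 ∧ e' p.2 < e' p.1).card := Finset.card_pos.2 ⟨_, hmem⟩
  omega


lemma eq_of_wd_eq (hwp : IsWordPoset R s) (e e' : P ≃ Fin m)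
    (he : Monotone ⇑e) (he' : Monotone ⇑e') (hw : wd s e = wd s e') : e = e' := by
  have key : ∀ n (h : n < m), e.symm ⟨n, h⟩ = e'.symm ⟨n, h⟩ := by
    intro n
    induction n using Nat.strong_induction_on with
    | _ n ih =>
      intro h
      have hs : s (e.symm ⟨n, h⟩) = s (e'.symm ⟨n, h⟩) := by
        have h1 := wd_getElem s e n h
        have h2 := wd_getElem s e' n h
        rw [← h1, ← h2]
        exact List.getElem_of_eq hw _
      rcases hwp.1 _ _ (Or.inl hs) with hle | hle
      · have hle2 : e' (e.symm ⟨n, h⟩) ≤ ⟨n, h⟩ := by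
          have := he' hle
          rwa [Equiv.apply_symm_apply] at this
        rcases lt_or_eq_of_le hle2 with hlt | heq
        · exfalso
          set k := e' (e.symm ⟨n, h⟩) with hk
          have hkn : (k : ℕ) < n := hlt
          have ihk := ih (k : ℕ) hkn k.isLt
          rw [Fin.eta] at ihk
          have h1 : e'.symm k = e.symm ⟨n, h⟩ := by
            rw [hk, Equiv.symm_apply_apply]
          rw [← ihk] at h1
          have := e.symm.injective h1
          rw [this] at hkn
          omega
        · exact (Equiv.eq_symm_apply e').mpr heq
      · have hle2 : e (e'.symm ⟨n, h⟩) ≤ ⟨n, h⟩ := by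
          have := he hle
          rwa [Equiv.apply_symm_apply] at this
        rcases lt_or_eq_of_le hle2 with hlt | heq
        · exfalso
          set k := e (e'.symm ⟨n, h⟩) with hk
          have hkn : (k : ℕ) < n := hlt
          have ihk := ih (k : ℕ) hkn k.isLt
          rw [Fin.eta] at ihk
          have h1 : e.symm k = e'.symm ⟨n, h⟩ := by
            rw [hk, Equiv.symm_apply_apply]
          rw [ihk] at h1
          have := e'.symm.injective h1
          rw [this] at hkn
          omega
        · exact ((Equiv.eq_symm_apply e).mpr heq).symm
  have hsymm : ⇑e.symm = ⇑e'.symm := by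
    funext i
    have := key (i : ℕ) i.isLt
    rwa [Fin.eta] at this
  ext p
  have h1 : e.symm (e p) = e'.symm (e p) := congrFun hsymm (e p)
  rw [Equiv.symm_apply_apply] at h1
  have h2 : e' p = e p := (Equiv.apply_eq_iff_eq_symm_apply e').mpr h1
  exact congrArg Fin.val h2.symm


lemma comm_of_mono (hwp : IsWordPoset R s) :
    ∀ (N : ℕ) (e e' : P ≃ Fin m), invc e e' ≤ N → Monotone ⇑e → Monotone ⇑e' →
      Relation.ReflTransGen (SwapStep R) (wd s e) (wd s e') := by
  intro N
  induction N with
  | zero =>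
    intro e e' h he he'
    rw [eq_of_invc_zero e e' (Nat.le_zero.mp h)]
  | succ N ih =>
    intro e e' h he he'
    rcases Nat.eq_zero_or_pos (invc e e') with h0 | hpos
    · rw [eq_of_invc_zero e e' h0]
    obtain ⟨i, j, hj, hinv⟩ := exists_adj e e' (by omega)
    have hx1 : ¬ e.symm i ≤ e.symm j := fun hle =>
      absurd (lt_of_lt_of_le hinv (he' hle)) (lt_irrefl _)
    have hx2 : ¬ e.symm j ≤ e.symm i := fun hle => by
      have h2 := he hle
      simp only [Equiv.apply_symm_apply, Fin.le_def] at h2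
      omega
    have hR : R (s (e.symm i)) (s (e.symm j)) := (incomp_R hwp hx1 hx2).1
    have hstep := swapStep_wd s e i j hj hR
    have hmono := mono_swap e he i j hj hx1 hx2
    have hinvle : invc (e.trans (Equiv.swap i j)) e' ≤ N := by
      have := invc_swap e e' i j hj hinv
      omega
    exact Relation.ReflTransGen.head hstep (ih _ e' hinvle hmono he')

end Aux

/-- The map `e ↦ w(e)`, where `w(e)_i = s(e⁻¹(i))`, is a bijection from the set of
linear extensions of the word poset `P` onto the commutation class of the word `w`
arising from any fixed linear extension `e₀`. -/
theorem stmt2 {S : Type*} (R : S → S → Prop) {P : Type*} [PartialOrder P] [Fintype P]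
    {m : ℕ} (hm : Fintype.card P = m) (s : P → S) (hwp : IsWordPoset R s)
    (e₀ : P ≃ Fin m) (he₀ : Monotone ⇑e₀) :
    Set.BijOn (fun e : P ≃ Fin m => List.ofFn fun i => s (e.symm i))
      {e : P ≃ Fin m | Monotone ⇑e}
      {v : List S | CommEquiv R (List.ofFn fun i => s (e₀.symm i)) v} := by
  refine ⟨?_, ?_, ?_⟩
  · intro e he
    exact comm_of_mono hwp (invc e₀ e) e₀ e le_rfl he₀ he
  · intro e he e' he' hw
    exact eq_of_wd_eq hwp e e' he he' hw
  · intro v hv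
    have hv' : Relation.ReflTransGen (SwapStep R) (wd s e₀) v := hv
    clear hv
    induction hv' with
    | refl => exact ⟨e₀, he₀, rfl⟩
    | tail hsteps hstep ih =>
      obtain ⟨e, he, rfl⟩ := ih
      rename_i u v' _
      obtain ⟨x, y, a, b, hR, hu, hv⟩ := hstep
      have hu : wd s e = x ++ a :: b :: y := hu
      have hn : x.length + 1 < m := by
        have := congrArg List.length hu
        simp at this
        omega
      set i : Fin m := ⟨x.length, by omega⟩ with hi
      set j : Fin m := ⟨x.length + 1, hn⟩ with hjdef
      have hj : (j : ℕ) = (i : ℕ) + 1 := rfl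
      have ha : s (e.symm i) = a := by
        have h2 := List.getElem_of_eq hu (show x.length < (wd s e).length by simp; omega)
        rw [wd_getElem s e x.length (by omega), getElem_append_len] at h2
        exact h2
      have hb : s (e.symm j) = b := by
        have h2 := List.getElem_of_eq hu
          (show x.length + 1 < (wd s e).length by simp; omega)
        rw [wd_getElem s e (x.length + 1) hn, getElem_append_len2] at h2
        exact h2
      by_cases hcomp : e.symm i ≤ e.symm j ∨ e.symm j ≤ e.symm i
      · have hlt : e.symm i < e.symm j := by
          rcases hcomp with hc | hc
          · refine lt_of_le_of_ne hc ?_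
            intro hh
            have := congrArg e hh
            simp only [Equiv.apply_symm_apply] at this
            rw [Fin.ext_iff] at this
            simp [hi, hjdef] at this
          · exfalso
            have h2 := he hc
            simp only [Equiv.apply_symm_apply, Fin.le_def] at h2
            simp [hi, hjdef] at h2
        have hcov : e.symm i ⋖ e.symm j := by
          refine ⟨hlt, ?_⟩
          intro z hz1 hz2
          have se := he.strictMono_of_injective e.injective
          have l1 := se hz1
          have l2 := se hz2
          simp only [Equiv.apply_symm_apply] at l1 l2
          rw [Fin.lt_def] at l1 l2
          simp [hi, hjdef] at l1 l2
          omega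
        rcases hwp.2 _ _ hcov with hsame | hnR
        · have hab : a = b := by rw [← ha, ← hb, hsame]
          subst hab
          refine ⟨e, he, ?_⟩
          show wd s e = _
          rw [hv]
          exact hu
        · exact absurd (by rw [ha, hb]; exact hR) hnR
      · push_neg at hcomp
        have hR' : R (s (e.symm i)) (s (e.symm j)) := by rw [ha, hb]; exact hR
        refine ⟨e.trans (Equiv.swap i j), mono_swap e he i j hj hcomp.1 hcomp.2, ?_⟩
        show wd s (e.trans (Equiv.swap i j)) = _
        rw [wd_swap' s e i j hj, hv, ha, hb]
        have htake : (wd s e).take (i : ℕ) = x := by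
          rw [hu]
          have : (i : ℕ) = x.length := rfl
          rw [this, List.take_left]
        have hdrop : (wd s e).drop ((i : ℕ) + 2) = y := by
          rw [hu]
          have hre : x ++ a :: b :: y = (x ++ [a, b]) ++ y := by simp
          have hlen : (x ++ [a, b]).length = (i : ℕ) + 2 := by simp [hi]
          rw [hre, ← hlen, List.drop_left]
        rw [htake, hdrop]
end

section
/- For every word w of length m over alphabet S with commutation relation R, there exists a word poset (P, ≤, s) with m elements whose set of linear extensions corresponds bijectively (via e ↦ w(e)) to the commutation class of w. Concretely, one may take P = {1,...,m} with s(i) = w_i and x ≤ y the transitive closure of the relation: i ⪯ j whenever i ≤ j as integers and w_i, w_j are equal or do not commute. -/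
/-- The heap order on the positions of the word `w : Fin m → S`: the transitive
(and reflexive) closure of `i ⪯ j` whenever `i ≤ j` and the letters `w i`, `w j`
are equal or do not commute. -/
def HeapLE {S : Type*} (R : S → S → Prop) {m : ℕ} (w : Fin m → S) :
    Fin m → Fin m → Prop :=
  Relation.ReflTransGen (fun i j => i ≤ j ∧ (w i = w j ∨ ¬ R (w i) (w j)))

section Aux

variable {S : Type*} {R : S → S → Prop} {m : ℕ} {w : Fin m → S}

lemma heapLE_mono {i j : Fin m} (h : HeapLE R w i j) : i ≤ j := by
  induction h with
  | refl => exact le_refl _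
  | tail _ step ih => exact le_trans ih step.1

lemma heapLE_antisymm {i j : Fin m} (h : HeapLE R w i j) (h' : HeapLE R w j i) : i = j :=
  le_antisymm (heapLE_mono h) (heapLE_mono h')

lemma heapLE_cover {i j : Fin m} (h : HeapLE R w i j) (hij : i ≠ j)
    (hz : ¬ ∃ z : Fin m, z ≠ i ∧ z ≠ j ∧ HeapLE R w i z ∧ HeapLE R w z j) :
    w i = w j ∨ ¬ R (w i) (w j) := by
  induction h using Relation.ReflTransGen.head_induction_on with
  | refl => exact absurd rfl hij
  | @head a c step rest ih =>
    by_cases hcj : c = j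
    · subst hcj; exact step.2
    · by_cases hca : c = a
      · subst hca; exact ih hij hz
      · exact absurd ⟨c, hca, hcj, Relation.ReflTransGen.single step, rest⟩ hz

lemma swap_fin_lt {p q x y : Fin m} (hpq : (p:ℕ) + 1 = q) (hxy : x < y)
    (hne : ¬(x = p ∧ y = q)) : Equiv.swap p q x < Equiv.swap p q y := by
  have vne : ∀ a b : Fin m, (a:ℕ) ≠ (b:ℕ) → a ≠ b := fun a b h h' => h (by rw [h'])
  by_cases hxp : x = p
  · subst hxp
    have hyq : y ≠ q := fun h => hne ⟨rfl, h⟩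
    have hyx : y ≠ x := hxy.ne'
    rw [Equiv.swap_apply_left, Equiv.swap_apply_of_ne_of_ne hyx hyq]
    have : (y:ℕ) ≠ q := fun h => hyq (Fin.ext h)
    exact Fin.lt_iff_val_lt_val.mpr (by have := Fin.lt_iff_val_lt_val.mp hxy; omega)
  · by_cases hxq : x = q
    · subst hxq
      have hyp : y ≠ p := vne _ _ (by have := Fin.lt_iff_val_lt_val.mp hxy; omega)
      have hyq : y ≠ x := hxy.ne'
      rw [Equiv.swap_apply_right, Equiv.swap_apply_of_ne_of_ne hyp hyq]
      exact Fin.lt_iff_val_lt_val.mpr (by have := Fin.lt_iff_val_lt_val.mp hxy; omega)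
    · rw [Equiv.swap_apply_of_ne_of_ne hxp hxq]
      by_cases hyp : y = p
      · subst hyp
        rw [Equiv.swap_apply_left]
        have hx : (x:ℕ) < y := Fin.lt_iff_val_lt_val.mp hxy
        exact Fin.lt_iff_val_lt_val.mpr (by omega)
      · by_cases hyq : y = q
        · subst hyq
          rw [Equiv.swap_apply_right]
          have hx : (x:ℕ) < y := Fin.lt_iff_val_lt_val.mp hxy
          have hxp' : (x:ℕ) ≠ p := fun h => hxp (Fin.ext h)
          exact Fin.lt_iff_val_lt_val.mpr (by omega)
        · rw [Equiv.swap_apply_of_ne_of_ne hyp hyq]; exact hxy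

lemma swap_fin_le {p q x y : Fin m} (hpq : (p:ℕ) + 1 = q) (hxy : x ≤ y)
    (hne : ¬(x = p ∧ y = q)) : Equiv.swap p q x ≤ Equiv.swap p q y := by
  rcases eq_or_lt_of_le hxy with rfl | hlt
  · exact le_refl _
  · exact le_of_lt (swap_fin_lt hpq hlt hne)

lemma swapStep_of_getElem {u v : List S} (hlen : v.length = u.length) (p : ℕ)
    (hp : p + 1 < u.length)
    (hR : R (u[p]'(by omega)) (u[p+1]'hp))
    (h1 : v[p]'(by omega) = u[p+1]'hp)
    (h2 : v[p+1]'(by omega) = u[p]'(by omega))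
    (h3 : ∀ q (hq : q < u.length), q ≠ p → q ≠ p + 1 → v[q]'(by omega) = u[q]'hq) :
    SwapStep R u v := by
  have htk : (u.take p).length = p := by rw [List.length_take]; omega
  refine ⟨u.take p, u.drop (p+2), u[p]'(by omega), u[p+1]'hp, hR, ?_, ?_⟩
  · conv_lhs => rw [← List.take_append_drop p u]
    congr 1
    rw [List.drop_eq_getElem_cons (by omega), List.drop_eq_getElem_cons (by omega)]
  · apply List.ext_getElem
    · simp [hlen]; omega
    · intro q hq1 hq2
      rcases lt_trichotomy q p with h | heq | h
      · rw [h3 q (by omega) (by omega) (by omega),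
          List.getElem_append_left (by rw [htk]; exact h : q < (u.take p).length),
          List.getElem_take]
      · subst heq
        rw [List.getElem_append_right htk.le]
        simp only [htk, Nat.sub_self, List.getElem_cons_zero]
        exact h1
      · rw [List.getElem_append_right (by rw [htk]; omega : (u.take p).length ≤ q)]
        rcases Nat.eq_or_lt_of_le h with h' | h'
        · have h6 : q - (List.take p u).length = 1 := by rw [htk]; omega
          simp only [h6, List.getElem_cons_succ, List.getElem_cons_zero]
          simpa [← h'] using h2
        · obtain ⟨k, hk⟩ : ∃ k, q - (List.take p u).length = k + 2 :=
            ⟨q - p - 2, by rw [htk]; omega⟩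
          simp only [hk, List.getElem_cons_succ]
          rw [List.getElem_drop, h3 q (by omega) (by omega) (by omega)]
          congr 1
          rw [htk] at hk
          omega

lemma swapStep_getElem {u v : List S} (h : SwapStep R u v) :
    ∃ (p : ℕ) (hlen : v.length = u.length) (hp : p + 1 < u.length),
      R (u[p]'(by omega)) (u[p+1]'hp) ∧
      (v[p]'(by omega)) = (u[p+1]'hp) ∧
      (v[p+1]'(by omega)) = (u[p]'(by omega)) ∧
      ∀ q (hq : q < u.length), q ≠ p → q ≠ p + 1 → (v[q]'(by omega)) = u[q]'hq := by
  obtain ⟨x, y, a, b, hR, rfl, rfl⟩ := h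
  have hx : x.length + 1 < (x ++ a :: b :: y).length := by
    simp only [List.length_append, List.length_cons]; omega
  refine ⟨x.length, by simp, hx, ?_, ?_, ?_, ?_⟩
  · rw [List.getElem_append_right (le_refl x.length),
      List.getElem_append_right (Nat.le_add_right x.length 1)]
    have e1 : x.length - x.length = 0 := by omega
    have e2 : x.length + 1 - x.length = 1 := by omega
    simp only [e1, e2]
    simpa using hR
  · rw [List.getElem_append_right (Nat.le_add_right x.length 1),
      List.getElem_append_right (le_refl x.length)]
    have e1 : x.length - x.length = 0 := by omega
    have e2 : x.length + 1 - x.length = 1 := by omega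
    simp only [e1, e2]
    simp
  · rw [List.getElem_append_right (le_refl x.length),
      List.getElem_append_right (Nat.le_add_right x.length 1)]
    have e1 : x.length - x.length = 0 := by omega
    have e2 : x.length + 1 - x.length = 1 := by omega
    simp only [e1, e2]
    simp
  · intro q hq hq1 hq2
    rcases lt_or_gt_of_ne hq1 with h' | h'
    · rw [List.getElem_append_left h', List.getElem_append_left h']
    · rw [List.getElem_append_right (by omega : x.length ≤ q),
        List.getElem_append_right (by omega : x.length ≤ q)]
      obtain ⟨k, hk⟩ : ∃ k, q - x.length = k + 2 := ⟨q - x.length - 2, by omega⟩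
      simp only [hk, List.getElem_cons_succ]

/-- The word read off from a linear extension `e`. -/
def HeapWord (w : Fin m → S) (e : Fin m ≃ Fin m) : List S :=
  List.ofFn fun i => w (e.symm i)

/-- `e` is a linear extension of the heap order. -/
def HeapExt (R : S → S → Prop) (w : Fin m → S) (e : Fin m ≃ Fin m) : Prop :=
  ∀ i j, HeapLE R w i j → e i ≤ e j

lemma heapWord_length (e : Fin m ≃ Fin m) : (HeapWord w e).length = m := by
  simp [HeapWord]

lemma heapWord_getElem (e : Fin m ≃ Fin m) (q : ℕ) (hq : q < (HeapWord w e).length) :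
    (HeapWord w e)[q] = w (e.symm ⟨q, by simpa [HeapWord] using hq⟩) :=
  List.getElem_ofFn _

lemma heapExt_swap {e : Fin m ≃ Fin m} (he : HeapExt R w e) {p q : Fin m}
    (hpq : (p:ℕ) + 1 = q)
    (hkey : ∀ x y, HeapLE R w x y → e x = p → e y = q → False) :
    HeapExt R w (e.trans (Equiv.swap p q)) := by
  intro i j h
  simp only [Equiv.trans_apply]
  exact swap_fin_le hpq (he i j h) (fun hc => hkey i j h hc.1 hc.2)

/-- The inversion set of (the inverse of) `e`. -/
def InvSet (e : Fin m ≃ Fin m) : Finset (Fin m × Fin m) :=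
  Finset.univ.filter fun pr => pr.1 < pr.2 ∧ e.symm pr.2 < e.symm pr.1

lemma fin_equiv_mono_eq_id (f : Fin m ≃ Fin m)
    (hf : ∀ p q : Fin m, p < q → f p < f q) : ∀ p, f p = p := by
  have hsm : ∀ (g : Fin m ≃ Fin m), (∀ p q : Fin m, p < q → g p < g q) →
      ∀ (k : ℕ) (p : Fin m), (p : ℕ) = k → k ≤ (g p : ℕ) := by
    intro g hg k
    induction k with
    | zero => intro p _; exact Nat.zero_le _
    | succ k ih =>
      intro p hp
      have hk : k < m := by omega
      have h1 : (⟨k, hk⟩ : Fin m) < p := Fin.lt_iff_val_lt_val.mpr (by simp [hp])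
      have h2 := hg _ _ h1
      have h3 := ih ⟨k, hk⟩ rfl
      have := Fin.lt_iff_val_lt_val.mp h2
      omega
  have hfs : ∀ p q : Fin m, p < q → f.symm p < f.symm q := by
    intro p q hpq
    rcases lt_trichotomy (f.symm p) (f.symm q) with h | h | h
    · exact h
    · exact absurd (f.symm.injective h) hpq.ne
    · have h2 := hf _ _ h
      simp only [Equiv.apply_symm_apply] at h2
      exact absurd hpq (not_lt.mpr h2.le)
  intro p
  have h1 : (p : ℕ) ≤ f p := hsm f hf _ p rfl
  have h2 : ((f p : Fin m) : ℕ) ≤ f.symm (f p) := hsm f.symm hfs _ (f p) rfl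
  rw [Equiv.symm_apply_apply] at h2
  exact Fin.ext (le_antisymm (by exact_mod_cast h2) h1)

lemma exists_descent (e : Fin m ≃ Fin m) (hne : (InvSet e).Nonempty) :
    ∃ (p : ℕ) (hp : p + 1 < m), e.symm ⟨p+1, hp⟩ < e.symm ⟨p, by omega⟩ := by
  by_contra hno
  push_neg at hno
  obtain ⟨⟨a, b⟩, hmem⟩ := hne
  simp only [InvSet, Finset.mem_filter, Finset.mem_univ, true_and] at hmem
  obtain ⟨hab, hinv⟩ := hmem
  have mono : ∀ (k : ℕ) (p q : Fin m), (q : ℕ) = p + k → e.symm p ≤ e.symm q := by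
    intro k
    induction k with
    | zero => intro p q h; exact le_of_eq (congrArg _ (Fin.ext h.symm))
    | succ k ih =>
      intro p q h
      have hq1 : (q:ℕ) = (p:ℕ) + k + 1 := by omega
      have hk2 : (p:ℕ) + k + 1 < m := by rw [← hq1]; exact q.isLt
      have hk : (p : ℕ) + k < m := by omega
      have h1 : e.symm p ≤ e.symm ⟨(p:ℕ) + k, hk⟩ := ih p ⟨(p:ℕ) + k, hk⟩ rfl
      have h2 := hno ((p:ℕ)+k) hk2
      have hq : q = ⟨(p:ℕ)+k+1, hk2⟩ := Fin.ext hq1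
      rw [hq]
      exact le_trans h1 (le_trans (le_of_eq rfl) h2)
  have := mono ((b:ℕ) - a) a b (by have := Fin.lt_iff_val_lt_val.mp hab; omega)
  exact absurd this (not_le.mpr hinv)

lemma invSet_swap_lt (e : Fin m ≃ Fin m) {p q : Fin m} (hpq : (p:ℕ) + 1 = q)
    (hdesc : e.symm q < e.symm p) :
    (InvSet (e.trans (Equiv.swap p q))).card < (InvSet e).card := by
  set σ := Equiv.swap p q with hσ
  have hσσ : ∀ x, σ (σ x) = x := fun x => Equiv.swap_apply_self p q x
  have hesymm : ∀ a, (e.trans σ).symm a = e.symm (σ a) := by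
    intro a
    simp [Equiv.symm_swap, σ]
  have hmem : ∀ pr : Fin m × Fin m, pr ∈ InvSet (e.trans σ) ↔
      (pr.1 < pr.2 ∧ e.symm (σ pr.2) < e.symm (σ pr.1)) := by
    intro pr
    simp only [InvSet, Finset.mem_filter, Finset.mem_univ, true_and, hesymm]
  have hsub : (InvSet (e.trans σ)).image (fun pr => (σ pr.1, σ pr.2)) ⊆ InvSet e := by
    intro pr hpr
    simp only [Finset.mem_image] at hpr
    obtain ⟨⟨a, b⟩, hab, rfl⟩ := hpr
    rw [hmem] at hab
    obtain ⟨h1, h2⟩ := hab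
    simp only [InvSet, Finset.mem_filter, Finset.mem_univ, true_and]
    refine ⟨?_, by simpa using h2⟩
    apply swap_fin_lt hpq h1
    rintro ⟨rfl, rfl⟩
    rw [Equiv.swap_apply_left, Equiv.swap_apply_right] at h2
    exact absurd hdesc (not_lt.mpr h2.le)
  have hpq' : p < q := Fin.lt_iff_val_lt_val.mpr (by omega)
  have hmem2 : (p, q) ∈ InvSet e := by
    simp only [InvSet, Finset.mem_filter, Finset.mem_univ, true_and]
    exact ⟨hpq', hdesc⟩
  have hnotmem : (p, q) ∉ (InvSet (e.trans σ)).image (fun pr => (σ pr.1, σ pr.2)) := by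
    intro hc
    simp only [Finset.mem_image] at hc
    obtain ⟨⟨a, b⟩, hab, heq⟩ := hc
    rw [hmem] at hab
    have ha : a = q := by
      have : σ a = p := (Prod.ext_iff.mp heq).1
      have := congrArg σ this
      rwa [hσσ, Equiv.swap_apply_left] at this
    have hb : b = p := by
      have : σ b = q := (Prod.ext_iff.mp heq).2
      have := congrArg σ this
      rwa [hσσ, Equiv.swap_apply_right] at this
    rw [ha, hb] at hab
    exact absurd hab.1 (not_lt.mpr hpq'.le)
  have hinj : Set.InjOn (fun pr : Fin m × Fin m => (σ pr.1, σ pr.2)) (InvSet (e.trans σ)) := by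
    intro a _ b _ hab
    have h1 := (Prod.ext_iff.mp hab).1
    have h2 := (Prod.ext_iff.mp hab).2
    exact Prod.ext (σ.injective h1) (σ.injective h2)
  calc (InvSet (e.trans σ)).card
      = ((InvSet (e.trans σ)).image (fun pr => (σ pr.1, σ pr.2))).card :=
        (Finset.card_image_of_injOn hinj).symm
    _ < (InvSet e).card := by
        apply Finset.card_lt_card
        rw [Finset.ssubset_iff_of_subset hsub]
        exact ⟨(p, q), hmem2, hnotmem⟩

lemma mapsto_main (hsymm : Symmetric R) (hirr : Irreflexive R) :
    ∀ (n : ℕ) (e : Fin m ≃ Fin m), (InvSet e).card ≤ n → HeapExt R w e →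
      CommEquiv R (List.ofFn w) (HeapWord w e) := by
  intro n
  induction n with
  | zero =>
    intro e hcard _
    have hempty : InvSet e = ∅ := Finset.card_eq_zero.mp (Nat.le_zero.mp hcard)
    have hmono : ∀ p q : Fin m, p < q → e.symm p < e.symm q := by
      intro p q hpq
      have hnotin : (p, q) ∉ InvSet e := by rw [hempty]; exact Finset.notMem_empty _
      simp only [InvSet, Finset.mem_filter, Finset.mem_univ, true_and, not_and, not_lt] at hnotin
      have hle := hnotin hpq
      exact lt_of_le_of_ne hle (fun h => hpq.ne (e.symm.injective h))
    have hid : ∀ p, e.symm p = p := fin_equiv_mono_eq_id e.symm hmono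
    have : HeapWord w e = List.ofFn w := by
      unfold HeapWord
      congr 1
      funext i
      rw [hid]
    rw [this]
    exact Relation.ReflTransGen.refl
  | succ n ih =>
    intro e hcard he
    rcases Nat.lt_or_ge (InvSet e).card (n+1) with h | h
    · exact ih e (by omega) he
    · have hne : (InvSet e).Nonempty := by
        rw [← Finset.card_pos]; omega
      obtain ⟨p, hp, hdesc⟩ := exists_descent e hne
      set p0 : Fin m := ⟨p, by omega⟩ with hp0
      set p1 : Fin m := ⟨p+1, hp⟩ with hp1
      have hpq : (p0 : ℕ) + 1 = p1 := rfl
      set i := e.symm p1 with hi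
      set j := e.symm p0 with hj
      have hij : i < j := hdesc
      have hcond : ¬ (w i = w j ∨ ¬ R (w i) (w j)) := by
        intro hc
        have h1 : HeapLE R w i j := Relation.ReflTransGen.single ⟨hij.le, hc⟩
        have h2 := he i j h1
        have h3 : e i = p1 := by rw [hi, Equiv.apply_symm_apply]
        have h4 : e j = p0 := by rw [hj, Equiv.apply_symm_apply]
        rw [h3, h4] at h2
        have h5 : (p1 : ℕ) ≤ (p0 : ℕ) := Fin.le_iff_val_le_val.mp h2
        simp only [hp0, hp1] at h5
        omega
      push_neg at hcond
      obtain ⟨hwne, hR⟩ := hcond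
      set e' := e.trans (Equiv.swap p0 p1) with he'
      have he'ext : HeapExt R w e' := by
        apply heapExt_swap he hpq
        intro x y hxy hx hy
        have hxj : x = j := by rw [hj, ← hx, Equiv.symm_apply_apply]
        have hyi : y = i := by rw [hi, ← hy, Equiv.symm_apply_apply]
        rw [hxj, hyi] at hxy
        exact absurd (heapLE_mono hxy) (not_le.mpr hij)
      have hcard' : (InvSet e').card ≤ n := by
        have hlt : (InvSet e').card < (InvSet e).card := by
          rw [he']; exact invSet_swap_lt e hpq hdesc
        omega
      have hcomm := ih e' hcard' he'ext
      have he'symm : ∀ a, e'.symm a = e.symm (Equiv.swap p0 p1 a) := by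
        intro a
        simp [he', Equiv.symm_swap]
      have hstep : SwapStep R (HeapWord w e') (HeapWord w e) := by
        apply swapStep_of_getElem (by rw [heapWord_length, heapWord_length]) p
          (by rw [heapWord_length]; exact hp)
        · rw [heapWord_getElem, heapWord_getElem]
          have h1 : e'.symm ⟨p, by omega⟩ = i := by
            rw [he'symm]
            have : (⟨p, by omega⟩ : Fin m) = p0 := rfl
            rw [this, Equiv.swap_apply_left]
          have h2 : e'.symm ⟨p+1, hp⟩ = j := by
            rw [he'symm]
            have : (⟨p+1, by omega⟩ : Fin m) = p1 := rfl
            rw [this, Equiv.swap_apply_right]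
          rw [h1, h2]
          exact hR
        · rw [heapWord_getElem, heapWord_getElem]
          have h2 : e'.symm ⟨p+1, by omega⟩ = j := by
            rw [he'symm]
            have : (⟨p+1, by omega⟩ : Fin m) = p1 := rfl
            rw [this, Equiv.swap_apply_right]
          rw [h2]
        · rw [heapWord_getElem, heapWord_getElem]
          have h1 : e'.symm ⟨p, by omega⟩ = i := by
            rw [he'symm]
            have : (⟨p, by omega⟩ : Fin m) = p0 := rfl
            rw [this, Equiv.swap_apply_left]
          rw [h1]
        · intro q hq hq1 hq2
          rw [heapWord_length] at hq
          rw [heapWord_getElem, heapWord_getElem, he'symm]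
          have hswap : Equiv.swap p0 p1 (⟨q, hq⟩ : Fin m) = ⟨q, hq⟩ :=
            Equiv.swap_apply_of_ne_of_ne
              (fun hc => hq1 (by simpa [hp0] using congrArg Fin.val hc))
              (fun hc => hq2 (by simpa [hp1] using congrArg Fin.val hc))
          exact congrArg (fun t => w (e.symm t)) hswap.symm
      exact hcomm.tail hstep

lemma inj_main {e₁ e₂ : Fin m ≃ Fin m} (h1 : HeapExt R w e₁) (h2 : HeapExt R w e₂)
    (hw : HeapWord w e₁ = HeapWord w e₂) : e₁ = e₂ := by
  have hfun := List.ofFn_inj.mp hw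
  have hsame : ∀ p : Fin m, w (e₁.symm p) = w (e₂.symm p) := fun p => congrFun hfun p
  have key : ∀ (k : ℕ) (p : Fin m), (p : ℕ) ≤ k → e₁.symm p = e₂.symm p := by
    intro k
    induction k using Nat.strong_induction_on with
    | _ k ih =>
      intro p hpk
      rcases lt_trichotomy (e₁.symm p) (e₂.symm p) with hlt | heq | hlt
      · exfalso
        have hle : HeapLE R w (e₁.symm p) (e₂.symm p) :=
          Relation.ReflTransGen.single ⟨hlt.le, Or.inl (hsame p)⟩
        have hle2 := h2 _ _ hle
        rw [Equiv.apply_symm_apply] at hle2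
        have hne : e₂ (e₁.symm p) ≠ p := by
          intro hc
          have h5 := congrArg e₂.symm hc
          rw [Equiv.symm_apply_apply] at h5
          exact hlt.ne h5
        have hltp : (e₂ (e₁.symm p) : ℕ) < (p : ℕ) :=
          Fin.lt_iff_val_lt_val.mp (lt_of_le_of_ne hle2 hne)
        have hih := ih (e₂ (e₁.symm p) : ℕ) (by omega) (e₂ (e₁.symm p)) le_rfl
        rw [Equiv.symm_apply_apply] at hih
        exact hne (e₁.symm.injective hih)
      · exact heq
      · exfalso
        have hle : HeapLE R w (e₂.symm p) (e₁.symm p) :=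
          Relation.ReflTransGen.single ⟨hlt.le, Or.inl (hsame p).symm⟩
        have hle2 := h1 _ _ hle
        rw [Equiv.apply_symm_apply] at hle2
        have hne : e₁ (e₂.symm p) ≠ p := by
          intro hc
          have h5 := congrArg e₁.symm hc
          rw [Equiv.symm_apply_apply] at h5
          exact hlt.ne h5
        have hltp : (e₁ (e₂.symm p) : ℕ) < (p : ℕ) :=
          Fin.lt_iff_val_lt_val.mp (lt_of_le_of_ne hle2 hne)
        have hih := ih (e₁ (e₂.symm p) : ℕ) (by omega) (e₁ (e₂.symm p)) le_rfl
        rw [Equiv.symm_apply_apply] at hih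
        exact hne (e₂.symm.injective hih.symm)
  apply Equiv.ext
  intro x
  have h := key ((e₁ x : Fin m) : ℕ) (e₁ x) le_rfl
  rw [Equiv.symm_apply_apply] at h
  have := congrArg e₂ h
  rw [Equiv.apply_symm_apply] at this
  exact this.symm

lemma surj_main (hsymm : Symmetric R) (hirr : Irreflexive R) {v : List S}
    (hv : CommEquiv R (List.ofFn w) v) :
    ∃ e : Fin m ≃ Fin m, HeapExt R w e ∧ HeapWord w e = v := by
  induction hv with
  | refl =>
    refine ⟨Equiv.refl _, fun i j h => heapLE_mono h, ?_⟩
    unfold HeapWord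
    simp
  | @tail b c hbc step ih =>
    obtain ⟨e, he, hwb⟩ := ih
    rw [← hwb] at step
    obtain ⟨p, hlen, hp', hR, hc1, hc2, hc3⟩ := swapStep_getElem step
    have hpm : p + 1 < m := by rwa [heapWord_length] at hp'
    set p0 : Fin m := ⟨p, by omega⟩ with hp0
    set p1 : Fin m := ⟨p + 1, hpm⟩ with hp1
    have hpq : (p0 : ℕ) + 1 = p1 := rfl
    set i := e.symm p0 with hi
    set j := e.symm p1 with hj
    have hup : (HeapWord w e)[p]'(by omega) = w i := by
      rw [heapWord_getElem]
    have hup1 : (HeapWord w e)[p+1]'hp' = w j := by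
      rw [heapWord_getElem]
    rw [hup, hup1] at hR
    have hij_ne : i ≠ j := by
      intro hc
      have h8 : p0 = p1 := e.symm.injective (by rw [← hi, ← hj, hc])
      have h9 := congrArg Fin.val h8
      simp [hp0, hp1] at h9
    set e' := e.trans (Equiv.swap p0 p1) with he'
    have he'ext : HeapExt R w e' := by
      apply heapExt_swap he hpq
      intro x y hxy hx hy
      have hxi : x = i := by rw [hi, ← hx, Equiv.symm_apply_apply]
      have hyj : y = j := by rw [hj, ← hy, Equiv.symm_apply_apply]
      rw [hxi, hyj] at hxy
      have hno : ¬ ∃ z : Fin m, z ≠ i ∧ z ≠ j ∧ HeapLE R w i z ∧ HeapLE R w z j := by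
        rintro ⟨z, hzx, hzy, hz1, hz2⟩
        have ha := he _ _ hz1
        have hb := he _ _ hz2
        have ha' : e i ≠ e z := fun hcc => hzx (e.injective hcc).symm
        have hb' : e z ≠ e j := fun hcc => hzy (e.injective hcc)
        have hia : e i = p0 := by rw [hi, Equiv.apply_symm_apply]
        have hjb : e j = p1 := by rw [hj, Equiv.apply_symm_apply]
        rw [hia] at ha ha'
        rw [hjb] at hb hb'
        have g1 : (p : ℕ) < ((e z : Fin m) : ℕ) := by
          have := Fin.lt_iff_val_lt_val.mp (lt_of_le_of_ne ha ha')
          simpa [hp0] using this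
        have g2 : ((e z : Fin m) : ℕ) < p + 1 := by
          have := Fin.lt_iff_val_lt_val.mp (lt_of_le_of_ne hb hb')
          simpa [hp1] using this
        omega
      rcases heapLE_cover hxy hij_ne hno with hcc | hcc
      · rw [hcc] at hR
        exact hirr _ hR
      · exact hcc hR
    have he'symm : ∀ a, e'.symm a = e.symm (Equiv.swap p0 p1 a) := by
      intro a
      simp [he', Equiv.symm_swap]
    refine ⟨e', he'ext, ?_⟩
    apply List.ext_getElem
    · rw [heapWord_length, hlen, heapWord_length]
    · intro q hq1 hq2
      have hqm : q < m := by rwa [heapWord_length] at hq1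
      by_cases hqp : q = p
      · subst hqp
        rw [heapWord_getElem]
        have hs : e'.symm ⟨q, hqm⟩ = j := by
          rw [he'symm]
          have h9 : (⟨q, hqm⟩ : Fin m) = p0 := rfl
          rw [h9, Equiv.swap_apply_left, hj]
        rw [hs, ← hup1]
        exact hc1.symm
      · by_cases hqp1 : q = p + 1
        · subst hqp1
          rw [heapWord_getElem]
          have hs : e'.symm ⟨p + 1, hqm⟩ = i := by
            rw [he'symm]
            have h9 : (⟨p + 1, hqm⟩ : Fin m) = p1 := rfl
            rw [h9, Equiv.swap_apply_right, hi]
          rw [hs, ← hup]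
          exact hc2.symm
        · rw [heapWord_getElem]
          have hs : e'.symm ⟨q, hqm⟩ = e.symm ⟨q, hqm⟩ := by
            rw [he'symm]
            congr 1
            exact Equiv.swap_apply_of_ne_of_ne
              (fun hcc => hqp (by simpa [hp0] using congrArg Fin.val hcc))
              (fun hcc => hqp1 (by simpa [hp1] using congrArg Fin.val hcc))
          rw [hs, hc3 q (by rwa [heapWord_length]) hqp hqp1, heapWord_getElem]

end Aux

/-- The heap order of a word `w` is a partial order, is a word poset (axioms (a) and (b)),
and its linear extensions correspond bijectively via `e ↦ w(e)` to the commutation class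
of `w`. -/
theorem stmt3 {S : Type*} (R : S → S → Prop) (hsymm : Symmetric R) (hirr : Irreflexive R)
    {m : ℕ} (w : Fin m → S) :
    IsPartialOrder (Fin m) (HeapLE R w) ∧
    (∀ i j : Fin m, (w i = w j ∨ ¬ R (w i) (w j)) → HeapLE R w i j ∨ HeapLE R w j i) ∧
    (∀ i j : Fin m, HeapLE R w i j → i ≠ j →
        (¬ ∃ z : Fin m, z ≠ i ∧ z ≠ j ∧ HeapLE R w i z ∧ HeapLE R w z j) →
        w i = w j ∨ ¬ R (w i) (w j)) ∧
    Set.BijOn (fun e : Fin m ≃ Fin m => List.ofFn fun i => w (e.symm i))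
      {e : Fin m ≃ Fin m | ∀ i j, HeapLE R w i j → e i ≤ e j}
      {v : List S | CommEquiv R (List.ofFn w) v} := by
  refine ⟨?_, ?_, ?_, ?_, ?_, ?_⟩
  · exact { refl := fun a => Relation.ReflTransGen.refl,
            trans := fun a b c hab hbc => hab.trans hbc,
            antisymm := fun a b => heapLE_antisymm }
  · intro i j hc
    rcases le_total i j with h | h
    · exact Or.inl (Relation.ReflTransGen.single ⟨h, hc⟩)
    · refine Or.inr (Relation.ReflTransGen.single ⟨h, ?_⟩)
      rcases hc with hc | hc
      · exact Or.inl hc.symm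
      · exact Or.inr (fun hr => hc (hsymm hr))
  · exact fun i j h hne hno => heapLE_cover h hne hno
  · intro e he2
    exact mapsto_main hsymm hirr (InvSet e).card e le_rfl he2
  · intro e1 h1 e2 h2 heq
    exact inj_main h1 h2 heq
  · intro v hv
    obtain ⟨e, he2, hw⟩ := surj_main hsymm hirr hv
    exact ⟨e, he2, hw⟩
end

section
/- Two words u and v of length m over alphabet S lie in the same commutation class if and only if their associated word posets (constructed as the heap order on positions) are isomorphic as labeled posets. Consequently, isomorphism classes of word posets with m elements are in bijection with commutation classes of words of length m. -/
namespace Stmt4Aux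

section aux
variable {S : Type*}

lemma swap_val {m k : ℕ} (hk : k + 1 < m) (i : Fin m) :
    ((Equiv.swap (⟨k, by omega⟩ : Fin m) ⟨k+1, hk⟩) i).val =
      if i.val = k then k + 1 else if i.val = k + 1 then k else i.val := by
  rcases eq_or_ne i ⟨k, by omega⟩ with rfl | h1
  · simp [Equiv.swap_apply_left]
  · rcases eq_or_ne i ⟨k+1, hk⟩ with rfl | h2
    · simp [Equiv.swap_apply_right, (by omega : ¬ (k+1 = k))]
    · rw [Equiv.swap_apply_of_ne_of_ne h1 h2]
      have : i.val ≠ k := fun h => h1 (Fin.ext h)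
      have : i.val ≠ k + 1 := fun h => h2 (Fin.ext h)
      simp_all

lemma ofFn_decomp {m k : ℕ} (hk : k + 1 < m) (w : Fin m → S) :
    List.ofFn w = (List.ofFn w).take k ++ w ⟨k, by omega⟩ :: w ⟨k+1, hk⟩ ::
      (List.ofFn w).drop (k+2) := by
  have e1 : (List.ofFn w).take k ++ [w ⟨k, by omega⟩] = (List.ofFn w).take (k+1) := by
    have := List.take_concat_get' (List.ofFn w) k (by simp; omega)
    simpa using this
  have e2 : (List.ofFn w).take (k+1) ++ [w ⟨k+1, hk⟩] = (List.ofFn w).take (k+2) := by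
    have := List.take_concat_get' (List.ofFn w) (k+1) (by simp; omega)
    simpa using this
  calc List.ofFn w = (List.ofFn w).take (k+2) ++ (List.ofFn w).drop (k+2) :=
        (List.take_append_drop _ _).symm
    _ = _ := by rw [← e2, ← e1]; simp

lemma ofFn_comp_swap {m k : ℕ} (hk : k + 1 < m) (w : Fin m → S) :
    List.ofFn (w ∘ (Equiv.swap (⟨k, by omega⟩ : Fin m) ⟨k+1, hk⟩)) =
      (List.ofFn w).take k ++ w ⟨k+1, hk⟩ :: w ⟨k, by omega⟩ ::
      (List.ofFn w).drop (k+2) := by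
  set σ := Equiv.swap (⟨k, by omega⟩ : Fin m) ⟨k+1, hk⟩ with hσ
  rw [ofFn_decomp hk (w ∘ σ)]
  have tk : (List.ofFn (w ∘ σ)).take k = (List.ofFn w).take k := by
    apply List.ext_getElem (by simp)
    intro i h1 h2
    simp only [List.getElem_take, List.getElem_ofFn, Function.comp_apply]
    congr 1
    apply Fin.ext
    rw [swap_val hk]
    simp at h1
    simp only [Fin.val_mk]
    rw [if_neg (by omega), if_neg (by omega)]
  have dk : (List.ofFn (w ∘ σ)).drop (k+2) = (List.ofFn w).drop (k+2) := by
    apply List.ext_getElem (by simp)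
    intro i h1 h2
    simp only [List.getElem_drop, List.getElem_ofFn, Function.comp_apply]
    congr 1
    apply Fin.ext
    rw [swap_val hk]
    simp only [Fin.val_mk]
    rw [if_neg (by omega), if_neg (by omega)]
  have v1 : (w ∘ σ) ⟨k, by omega⟩ = w ⟨k+1, hk⟩ := by
    simp only [Function.comp_apply]; congr 1; apply Fin.ext; rw [swap_val hk]; simp
  have v2 : (w ∘ σ) ⟨k+1, hk⟩ = w ⟨k, by omega⟩ := by
    simp only [Function.comp_apply]; congr 1; apply Fin.ext; rw [swap_val hk]
    simp [(by omega : ¬ (k + 1 = k))]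
  rw [tk, dk, v1, v2]

end aux

section heap
variable {R : S → S → Prop}

lemma step_swap_iff {m k : ℕ} (hk : k + 1 < m) (w : Fin m → S)
    (hne : w ⟨k, by omega⟩ ≠ w ⟨k+1, hk⟩)
    (hR : R (w ⟨k, by omega⟩) (w ⟨k+1, hk⟩)) (hR' : R (w ⟨k+1, hk⟩) (w ⟨k, by omega⟩))
    (i j : Fin m) :
    let σ := Equiv.swap (⟨k, by omega⟩ : Fin m) ⟨k+1, hk⟩
    ((i ≤ j ∧ (w i = w j ∨ ¬ R (w i) (w j))) ↔
      (σ i ≤ σ j ∧ ((w ∘ σ) (σ i) = (w ∘ σ) (σ j) ∨ ¬ R ((w ∘ σ) (σ i)) ((w ∘ σ) (σ j))))) := by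
  intro σ
  have hσσ : ∀ x, σ (σ x) = x := fun x => Equiv.swap_apply_self _ _ x
  have hlab : ∀ x, (w ∘ σ) (σ x) = w x := fun x => by
    simp only [Function.comp_apply, hσσ]
  rw [hlab i, hlab j]
  constructor
  · rintro ⟨hle, hcond⟩
    refine ⟨?_, hcond⟩
    rw [Fin.le_def, swap_val hk, swap_val hk]
    rcases eq_or_ne i.val k with hik | hik
    · rcases eq_or_ne j.val k with hjk | hjk
      · simp [hik, hjk]
      · rcases eq_or_ne j.val (k+1) with hjk1 | hjk1
        · exfalso
          have : w i = w ⟨k, by omega⟩ := by congr 1; exact Fin.ext hik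
          have : w j = w ⟨k+1, hk⟩ := by congr 1; exact Fin.ext hjk1
          rcases hcond with h | h
          · exact hne (by simp_all)
          · exact h (by simp_all)
        · have := Fin.le_def.mp hle; simp [hik, hjk, hjk1]; omega
    · rcases eq_or_ne i.val (k+1) with hik1 | hik1
      · have := Fin.le_def.mp hle
        rcases eq_or_ne j.val k with hjk | hjk
        · omega
        · rcases eq_or_ne j.val (k+1) with hjk1 | hjk1
          · simp [hik, hik1, hjk, hjk1]
          · simp [hik, hik1, hjk, hjk1]; omega
      · have := Fin.le_def.mp hle
        rcases eq_or_ne j.val k with hjk | hjk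
        · simp [hik, hik1, hjk]; omega
        · rcases eq_or_ne j.val (k+1) with hjk1 | hjk1
          · simp [hik, hik1, hjk, hjk1]; omega
          · simp [hik, hik1, hjk, hjk1]; omega
  · rintro ⟨hle, hcond⟩
    refine ⟨?_, hcond⟩
    rw [Fin.le_def, swap_val hk, swap_val hk] at hle
    rw [Fin.le_def]
    rcases eq_or_ne i.val k with hik | hik
    · rcases eq_or_ne j.val k with hjk | hjk
      · omega
      · rcases eq_or_ne j.val (k+1) with hjk1 | hjk1
        · omega
        · simp [hik, hjk, hjk1] at hle; omega
    · rcases eq_or_ne i.val (k+1) with hik1 | hik1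
      · rcases eq_or_ne j.val k with hjk | hjk
        · exfalso
          have hwi : w i = w ⟨k+1, hk⟩ := by congr 1; exact Fin.ext hik1
          have hwj : w j = w ⟨k, by omega⟩ := by congr 1; exact Fin.ext hjk
          rcases hcond with h | h
          · exact hne (by simp_all)
          · exact h (by rw [hwi, hwj]; exact hR')
        · rcases eq_or_ne j.val (k+1) with hjk1 | hjk1
          · omega
          · simp [hik, hik1, hjk, hjk1] at hle; omega
      · rcases eq_or_ne j.val k with hjk | hjk
        · simp [hik, hik1, hjk] at hle; omega
        · rcases eq_or_ne j.val (k+1) with hjk1 | hjk1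
          · simp [hik, hik1, hjk, hjk1] at hle; omega
          · simp [hik, hik1, hjk, hjk1] at hle; omega

lemma heapLE'_swap {m k : ℕ} (hk : k + 1 < m) (w : Fin m → S)
    (hne : w ⟨k, by omega⟩ ≠ w ⟨k+1, hk⟩)
    (hR : R (w ⟨k, by omega⟩) (w ⟨k+1, hk⟩)) (hR' : R (w ⟨k+1, hk⟩) (w ⟨k, by omega⟩))
    (i j : Fin m) :
    HeapLE R w i j ↔
      HeapLE R (w ∘ (Equiv.swap (⟨k, by omega⟩ : Fin m) ⟨k+1, hk⟩))
        ((Equiv.swap (⟨k, by omega⟩ : Fin m) ⟨k+1, hk⟩) i)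
        ((Equiv.swap (⟨k, by omega⟩ : Fin m) ⟨k+1, hk⟩) j) := by
  set σ := Equiv.swap (⟨k, by omega⟩ : Fin m) ⟨k+1, hk⟩ with hσdef
  have hσσ : ∀ x, σ (σ x) = x := fun x => Equiv.swap_apply_self _ _ x
  constructor
  · intro h
    refine Relation.ReflTransGen.lift σ (fun a b hab => ?_) _ _ h
    exact (step_swap_iff hk w hne hR hR' a b).mp hab
  · intro h
    have key : Relation.ReflTransGen
        (fun i j => i ≤ j ∧ (w i = w j ∨ ¬ R (w i) (w j))) (σ (σ i)) (σ (σ j)) := by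
      refine Relation.ReflTransGen.lift σ (fun a b hab => ?_) _ _ h
      have h2 := (step_swap_iff hk w hne hR hR' (σ a) (σ b)).mpr
      rw [hσσ, hσσ] at h2
      exact h2 hab
    rwa [hσσ, hσσ] at key

lemma forward_step (hsymm : Symmetric R) (hirr : Irreflexive R) {m : ℕ}
    {u v : Fin m → S}
    (h : ∃ (x y : List S) (a b : S),
      R a b ∧ List.ofFn u = x ++ a :: b :: y ∧ List.ofFn v = x ++ b :: a :: y) :
    ∃ f : Fin m ≃ Fin m,
      (∀ i j : Fin m, HeapLE R u i j ↔ HeapLE R v (f i) (f j)) ∧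
      ∀ i : Fin m, v (f i) = u i := by
  obtain ⟨x, y, a, b, hR, h1, h2⟩ := h
  set k := x.length with hkdef
  have hk : k + 1 < m := by
    have := congrArg List.length h1
    simp at this
    omega
  have hx : (List.ofFn u).take k = x := by
    rw [h1, hkdef]; simp
  have ha : u ⟨k, by omega⟩ = a := by
    have h0 := List.getElem_of_eq h1 (i := k) (by simp; omega)
    rw [List.getElem_append_right (by omega)] at h0
    simpa [hkdef] using h0
  have hb : u ⟨k+1, hk⟩ = b := by
    have h0 := List.getElem_of_eq h1 (i := k+1) (by simp; omega)
    rw [List.getElem_append_right (by omega)] at h0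
    simp only [List.getElem_ofFn] at h0
    rw [h0]
    simp [hkdef]
  have hy : (List.ofFn u).drop (k+2) = y := by
    rw [h1, hkdef]
    simp [show x.length + 2 = x.length + 2 from rfl]
  set σ := Equiv.swap (⟨k, by omega⟩ : Fin m) ⟨k+1, hk⟩ with hσdef
  have hv : v = u ∘ σ := by
    have e : List.ofFn (u ∘ σ) = x ++ b :: a :: y := by
      rw [ofFn_comp_swap hk u, hx, ha, hb, hy]
    have : List.ofFn v = List.ofFn (u ∘ σ) := by rw [h2, e]
    exact List.ofFn_injective this
  have hne : u ⟨k, by omega⟩ ≠ u ⟨k+1, hk⟩ := by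
    rw [ha, hb]; intro hab; exact hirr a (hab ▸ hR)
  have hσσ : ∀ z, σ (σ z) = z := fun z => Equiv.swap_apply_self _ _ z
  refine ⟨σ, fun i j => ?_, fun i => ?_⟩
  · rw [hv]
    exact heapLE'_swap hk u hne (ha ▸ hb ▸ hR) (ha ▸ hb ▸ hsymm hR) i j
  · rw [hv]; simp only [Function.comp_apply, hσσ]

lemma forward_full (hsymm : Symmetric R) (hirr : Irreflexive R) {m : ℕ}
    (u v : Fin m → S) (h : CommEquiv R (List.ofFn u) (List.ofFn v)) :
    ∃ f : Fin m ≃ Fin m,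
      (∀ i j : Fin m, HeapLE R u i j ↔ HeapLE R v (f i) (f j)) ∧
      ∀ i : Fin m, v (f i) = u i := by
  have key : ∀ l : List S, CommEquiv R (List.ofFn u) l →
      ∃ w : Fin m → S, l = List.ofFn w ∧
        ∃ f : Fin m ≃ Fin m,
          (∀ i j : Fin m, HeapLE R u i j ↔ HeapLE R w (f i) (f j)) ∧
          ∀ i : Fin m, w (f i) = u i := by
    intro l hl
    induction hl with
    | refl => exact ⟨u, rfl, Equiv.refl _, fun i j => Iff.rfl, fun i => rfl⟩
    | tail _ hstep ih =>
      obtain ⟨w, rfl, f, hf, hlab⟩ := ih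
      rename_i c _
      have hlen : c.length = m := by
        obtain ⟨x, y, a, b, _, h1, h2⟩ := hstep
        have e1 := congrArg List.length h1
        have e2 := congrArg List.length h2
        simp at e1 e2
        omega
      obtain ⟨w', rfl⟩ : ∃ w' : Fin m → S, c = List.ofFn w' := by
        subst hlen
        exact ⟨fun i => c.get i, (List.ofFn_get c).symm⟩
      obtain ⟨g, hg, hglab⟩ := forward_step hsymm hirr (u := w) (v := w') hstep
      refine ⟨w', rfl, f.trans g, fun i j => ?_, fun i => ?_⟩
      · rw [hf i j, hg (f i) (f j)]; rfl
      · simp only [Equiv.trans_apply]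
        rw [hglab (f i), hlab i]
  obtain ⟨w, hw, f, hf, hlab⟩ := key (List.ofFn v) h
  have : v = w := List.ofFn_injective hw
  subst this
  exact ⟨f, hf, hlab⟩

lemma swapStep_ofFn {m k : ℕ} (hk : k + 1 < m) (w : Fin m → S)
    (hR : R (w ⟨k, by omega⟩) (w ⟨k+1, hk⟩)) :
    ∃ (x y : List S) (a b : S), R a b ∧ List.ofFn w = x ++ a :: b :: y ∧
      List.ofFn (w ∘ (Equiv.swap (⟨k, by omega⟩ : Fin m) ⟨k+1, hk⟩)) = x ++ b :: a :: y :=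
  ⟨(List.ofFn w).take k, (List.ofFn w).drop (k+2), w ⟨k, by omega⟩, w ⟨k+1, hk⟩, hR,
    ofFn_decomp hk w, ofFn_comp_swap hk w⟩

lemma moveFront (hsymm : Symmetric R) {m : ℕ} :
    ∀ (k : ℕ) (hk : k < m) (w : Fin m → S),
      (∀ q : Fin m, q.val < k → w q ≠ w ⟨k, hk⟩ ∧ R (w q) (w ⟨k, hk⟩)) →
      ∃ g : Fin m ≃ Fin m, (g ⟨0, by omega⟩).val = k ∧
        CommEquiv R (List.ofFn w) (List.ofFn (w ∘ g)) ∧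
        (∀ i j : Fin m, HeapLE R (w ∘ g) i j ↔ HeapLE R w (g i) (g j)) := by
  intro k
  induction k with
  | zero =>
    intro hk w _
    exact ⟨Equiv.refl _, rfl, Relation.ReflTransGen.refl, fun i j => Iff.rfl⟩
  | succ k ih =>
    intro hk w hcomm
    set σ := Equiv.swap (⟨k, by omega⟩ : Fin m) ⟨k+1, hk⟩ with hσdef
    have hσσ : ∀ z, σ (σ z) = z := fun z => Equiv.swap_apply_self _ _ z
    have hkk : (⟨k, by omega⟩ : Fin m).val < k + 1 := by simp
    obtain ⟨hne, hRk⟩ := hcomm ⟨k, by omega⟩ hkk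
    set w₁ := w ∘ σ with hw₁
    have hw₁k : w₁ ⟨k, by omega⟩ = w ⟨k+1, hk⟩ := by
      simp only [hw₁, Function.comp_apply]
      congr 1
      exact Equiv.swap_apply_left _ _
    have hw₁q : ∀ q : Fin m, q.val < k → w₁ q = w q := by
      intro q hq
      simp only [hw₁, Function.comp_apply]
      congr 1
      apply Fin.ext
      rw [swap_val hk, if_neg (by omega), if_neg (by omega)]
    have hcomm₁ : ∀ q : Fin m, q.val < k → w₁ q ≠ w₁ ⟨k, by omega⟩ ∧
        R (w₁ q) (w₁ ⟨k, by omega⟩) := by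
      intro q hq
      rw [hw₁q q hq, hw₁k]
      exact hcomm q (by omega)
    obtain ⟨g₁, hg₁0, hg₁ce, hg₁iso⟩ := ih (by omega) w₁ hcomm₁
    refine ⟨g₁.trans σ, ?_, ?_, ?_⟩
    · simp only [Equiv.trans_apply]
      have : g₁ ⟨0, by omega⟩ = ⟨k, by omega⟩ := Fin.ext hg₁0
      rw [this, hσdef, Equiv.swap_apply_left]
    · have step1 : ∃ (x y : List S) (a b : S), R a b ∧ List.ofFn w = x ++ a :: b :: y ∧
          List.ofFn w₁ = x ++ b :: a :: y := swapStep_ofFn hk w hRk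
      have hcompeq : w ∘ (g₁.trans σ) = w₁ ∘ g₁ := by
        funext i
        simp [hw₁]
      rw [hcompeq]
      exact Relation.ReflTransGen.head step1 hg₁ce
    · intro i j
      have hcompeq : w ∘ (g₁.trans σ) = w₁ ∘ g₁ := by
        funext i
        simp [hw₁, Function.comp_apply, Equiv.trans_apply]
      rw [hcompeq]
      rw [hg₁iso i j]
      have hswap := heapLE'_swap hk w hne hRk (hsymm hRk) (σ (g₁ i)) (σ (g₁ j))
      rw [hσσ, hσσ] at hswap
      simp only [Equiv.trans_apply]
      rw [hw₁]
      exact hswap.symm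

lemma heapLE'_le {m : ℕ} {w : Fin m → S} {i j : Fin m} (h : HeapLE R w i j) : i ≤ j := by
  induction h with
  | refl => exact le_refl _
  | tail _ h ih => exact le_trans ih h.1

lemma heapLE'_tail {m : ℕ} (w : Fin (m+1) → S) (i j : Fin m) :
    HeapLE R (w ∘ Fin.succ) i j ↔ HeapLE R w i.succ j.succ := by
  constructor
  · intro h
    exact Relation.ReflTransGen.lift Fin.succ
      (fun a b hab => ⟨by simpa [Fin.succ_le_succ_iff] using hab.1, hab.2⟩) _ _ h
  · intro h
    have key : ∀ a b : Fin (m+1), HeapLE R w a b → ∀ i' j' : Fin m,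
        a = i'.succ → b = j'.succ → HeapLE R (w ∘ Fin.succ) i' j' := by
      intro a b hab
      induction hab with
      | refl =>
        rintro i' j' rfl hs
        have : i' = j' := Fin.succ_injective _ hs
        subst this
        exact Relation.ReflTransGen.refl
      | @tail c d hprev hstep ih =>
        rintro i' j' rfl rfl
        have hc : i'.succ ≤ c := heapLE'_le hprev
        have hc0 : c ≠ 0 := by
          intro h0
          rw [h0] at hc
          exact absurd (Fin.le_zero_iff.mp hc) (Fin.succ_ne_zero i')
        obtain ⟨c', rfl⟩ : ∃ c' : Fin m, c = c'.succ :=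
          ⟨c.pred hc0, (Fin.succ_pred c hc0).symm⟩
        refine Relation.ReflTransGen.tail (ih i' c' rfl rfl) ?_
        exact ⟨by simpa [Fin.succ_le_succ_iff] using hstep.1, hstep.2⟩
    exact key _ _ h i j rfl rfl

lemma commEquiv'_cons {c : S} {l l' : List S} (h : CommEquiv R l l') :
    CommEquiv R (c :: l) (c :: l') := by
  refine Relation.ReflTransGen.lift (c :: ·) (fun a b hab => ?_) _ _ h
  obtain ⟨x, y, a', b', hR, h1, h2⟩ := hab
  exact ⟨c :: x, y, a', b', hR, by simp [h1], by simp [h2]⟩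

lemma commEquiv'_symm (hsymm : Symmetric R) {l l' : List S} (h : CommEquiv R l l') :
    CommEquiv R l' l := by
  induction h with
  | refl => exact Relation.ReflTransGen.refl
  | tail _ h ih =>
    obtain ⟨x, y, a, b, hR, h1, h2⟩ := h
    exact Relation.ReflTransGen.head ⟨x, y, b, a, hsymm hR, h2, h1⟩ ih

lemma reverse_full (hsymm : Symmetric R) : ∀ (m : ℕ) (u v : Fin m → S),
    (∃ f : Fin m ≃ Fin m,
      (∀ i j : Fin m, HeapLE R u i j ↔ HeapLE R v (f i) (f j)) ∧
      ∀ i : Fin m, v (f i) = u i) →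
    CommEquiv R (List.ofFn u) (List.ofFn v) := by
  intro m
  induction m with
  | zero =>
    intro u v _
    simp only [List.ofFn_zero]
    exact Relation.ReflTransGen.refl
  | succ m ih =>
    rintro u v ⟨f, hiso, hlab⟩
    set p := f 0 with hp
    have hcomm : ∀ q : Fin (m+1), q.val < p.val → v q ≠ v p ∧ R (v q) (v p) := by
      intro q hq
      by_contra hcon
      have hcond : v q = v p ∨ ¬ R (v q) (v p) := by
        by_cases h1 : v q = v p
        · exact Or.inl h1
        · refine Or.inr fun h2 => hcon ⟨h1, h2⟩
      have hstep : HeapLE R v q p :=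
        Relation.ReflTransGen.single ⟨le_of_lt hq, hcond⟩
      have : HeapLE R v (f (f.symm q)) (f 0) := by
        rwa [Equiv.apply_symm_apply]
      have hle : HeapLE R u (f.symm q) 0 := (hiso _ _).mpr this
      have := heapLE'_le hle
      have h0 : f.symm q = 0 := le_antisymm this (Fin.zero_le _)
      have : q = p := by rw [← Equiv.apply_symm_apply f q, h0, hp]
      omega
    obtain ⟨g, hg0, hgce, hgiso⟩ := moveFront hsymm p.val p.isLt v
      (fun q hq => hcomm q hq |>.imp (fun h => by convert h) (fun h => by convert h))
    set v₂ := v ∘ g with hv₂def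
    set F := f.trans g.symm with hFdef
    have hg00 : g 0 = p := Fin.ext hg0
    have hF0 : F 0 = 0 := by
      simp only [hFdef, Equiv.trans_apply, ← hp, ← hg00, Equiv.symm_apply_apply]
    have hFiso : ∀ i j : Fin (m+1), HeapLE R u i j ↔ HeapLE R v₂ (F i) (F j) := by
      intro i j
      rw [hiso i j, hgiso (F i) (F j)]
      simp only [hFdef, Equiv.trans_apply, Equiv.apply_symm_apply]
    have hFlab : ∀ i : Fin (m+1), v₂ (F i) = u i := by
      intro i
      simp only [hv₂def, hFdef, Equiv.trans_apply, Function.comp_apply,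
        Equiv.apply_symm_apply]
      exact hlab i
    have hFne : ∀ i : Fin m, F i.succ ≠ 0 := fun i h =>
      Fin.succ_ne_zero i (F.injective (h.trans hF0.symm))
    have hGne : ∀ i : Fin m, F.symm i.succ ≠ 0 := fun i h => by
      apply Fin.succ_ne_zero i
      have := congrArg F h
      rwa [Equiv.apply_symm_apply, hF0] at this
    set F' : Fin m ≃ Fin m :=
      { toFun := fun i => (F i.succ).pred (hFne i)
        invFun := fun i => (F.symm i.succ).pred (hGne i)
        left_inv := fun i => by
          simp only [Fin.succ_pred, Equiv.symm_apply_apply, Fin.pred_succ]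
        right_inv := fun i => by
          simp only [Fin.succ_pred, Equiv.apply_symm_apply, Fin.pred_succ] } with hF'def
    have hF'succ : ∀ i : Fin m, (F' i).succ = F i.succ := fun i => by
      simp only [hF'def, Equiv.coe_fn_mk, Fin.succ_pred]
    have ihres : CommEquiv R (List.ofFn (u ∘ Fin.succ)) (List.ofFn (v₂ ∘ Fin.succ)) := by
      apply ih
      refine ⟨F', fun i j => ?_, fun i => ?_⟩
      · rw [heapLE'_tail, heapLE'_tail, hF'succ, hF'succ]
        exact hFiso i.succ j.succ
      · simp only [Function.comp_apply, hF'succ]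
        exact hFlab i.succ
    have h00 : v₂ 0 = u 0 := by
      have := hFlab 0
      rwa [hF0] at this
    have huv₂ : CommEquiv R (List.ofFn u) (List.ofFn v₂) := by
      rw [List.ofFn_succ (f := u), List.ofFn_succ (f := v₂), h00]
      exact commEquiv'_cons ihres
    exact huv₂.trans (commEquiv'_symm hsymm hgce)

end heap
end Stmt4Aux

/-- Two words of length `m` lie in the same commutation class iff their heap posets are
isomorphic as labeled posets; hence isomorphism classes of word posets with `m` elements
are in bijection with commutation classes of words of length `m`. -/
theorem stmt4 {S : Type*} (R : S → S → Prop) (hsymm : Symmetric R) (hirr : Irreflexive R)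
    {m : ℕ} (u v : Fin m → S) :
    CommEquiv R (List.ofFn u) (List.ofFn v) ↔
      ∃ f : Fin m ≃ Fin m,
        (∀ i j : Fin m, HeapLE R u i j ↔ HeapLE R v (f i) (f j)) ∧
        ∀ i : Fin m, v (f i) = u i := by
  constructor
  · exact fun h => Stmt4Aux.forward_full hsymm hirr u v h
  · exact fun h => Stmt4Aux.reverse_full hsymm m u v h
end

section
/- The number of reduced words for an element w of a Coxeter group equals the sum, over all commutation classes of reduced words for w (equivalently, over the corresponding word posets P ∈ WP(w)), of the number E(P) of linear extensions of P. -/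
/-- The number `E(P)` of linear extensions of the word poset (heap) of the word `ω`,
with respect to the commutation relation `M a b = 2` of a Coxeter matrix `M`. -/
noncomputable def ExtCount {B : Type*} (M : CoxeterMatrix B) (ω : List B) : ℕ :=
  Nat.card {e : Fin ω.length ≃ Fin ω.length //
    ∀ i j : Fin ω.length, HeapLE (fun a b => M a b = 2) ω.get i j → e i ≤ e j}


namespace Stmt12Aux

variable {S : Type*} {R : S → S → Prop}

lemma swapStep_symm (hs : ∀ a b, R a b → R b a) {u v : List S} (h : SwapStep R u v) :
    SwapStep R v u := by
  obtain ⟨x, y, a, b, hab, hu, hv⟩ := h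
  exact ⟨x, y, b, a, hs _ _ hab, hv, hu⟩

lemma heapLE_le {m : ℕ} {w : Fin m → S} {i j : Fin m} (h : HeapLE R w i j) : i ≤ j := by
  have h' : Relation.ReflTransGen (fun i j => i ≤ j ∧ (w i = w j ∨ ¬ R (w i) (w j))) i j := h
  clear h
  induction h' with
  | refl => exact le_refl _
  | tail _ h ih => exact ih.trans h.1

/-- `e` is a linear extension of the heap of `w`. -/
def IsExt (R : S → S → Prop) {m : ℕ} (w : Fin m → S) (e : Fin m ≃ Fin m) : Prop :=
  ∀ i j, HeapLE R w i j → e i ≤ e j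

lemma isExt_refl {m : ℕ} (w : Fin m → S) : IsExt R w (Equiv.refl _) :=
  fun _ _ h => heapLE_le h

/-- derive the single-step pair from a heap chain mapped onto adjacent values. -/
lemma exists_step_pair {m : ℕ} {w : Fin m → S} {e : Fin m ≃ Fin m} (he : IsExt R w e)
    {k0 k1 : Fin m} (hkk : (k0 : ℕ) + 1 = k1) {p q : Fin m} (h : HeapLE R w p q)
    (hp : e p = k0) (hq : e q = k1) :
    ∃ r r', ((r : Fin m) ≤ r' ∧ (w r = w r' ∨ ¬ R (w r) (w r'))) ∧ e r = k0 ∧ e r' = k1 := by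
  have h' : Relation.ReflTransGen (fun i j => i ≤ j ∧ (w i = w j ∨ ¬ R (w i) (w j))) p q := h
  clear h
  revert hq
  induction h' with
  | refl =>
    intro hq
    rw [hp] at hq
    exact absurd (congrArg Fin.val hq) (by omega)
  | @tail c q hpc hstep ih =>
    intro hq
    by_cases hck : e c = k1
    · exact ih hck
    · have h1 : k0 ≤ e c := hp ▸ he p c hpc
      have h2 : e c ≤ e q := he c q (Relation.ReflTransGen.single hstep)
      rw [hq] at h2
      have hck0 : e c = k0 := by
        have hv1 : (k0 : ℕ) ≤ e c := h1
        have hv2 : (e c : ℕ) ≤ k1 := h2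
        have hv3 : (e c : ℕ) ≠ k1 := fun hh => hck (Fin.ext hh)
        exact Fin.ext (by omega)
      exact ⟨c, q, hstep, hck0, hq⟩

lemma swap_le_swap {m : ℕ} {k0 k1 x y : Fin m} (hkk : (k0 : ℕ) + 1 = k1) (hxy : x ≤ y)
    (hno : ¬(x = k0 ∧ y = k1)) : Equiv.swap k0 k1 x ≤ Equiv.swap k0 k1 y := by
  simp only [Equiv.swap_apply_def, Fin.ext_iff, Fin.le_def, Fin.lt_def] at *
  split_ifs <;> omega

lemma swap_lt_swap_iff {m : ℕ} {k0 k1 x y : Fin m} (hkk : (k0 : ℕ) + 1 = k1)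
    (h1 : ¬(x = k0 ∧ y = k1)) (h2 : ¬(x = k1 ∧ y = k0)) :
    Equiv.swap k0 k1 x < Equiv.swap k0 k1 y ↔ x < y := by
  simp only [Equiv.swap_apply_def, Fin.ext_iff, Fin.le_def, Fin.lt_def] at *
  split_ifs <;> omega


lemma ofFn_decomp {m : ℕ} (g : Fin m → S) (k0 k1 : Fin m) (hkk : (k0 : ℕ) + 1 = k1) :
    List.ofFn g =
      (List.ofFn g).take k0 ++ g k0 :: g k1 :: (List.ofFn g).drop ((k0 : ℕ) + 2) := by
  have h0 : (k0 : ℕ) < (List.ofFn g).length := by simp [k0.2]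
  have h1 : (k0 : ℕ) + 1 < (List.ofFn g).length := by
    simp only [List.length_ofFn]; rw [hkk]; exact k1.2
  conv_lhs => rw [← List.take_append_drop (k0 : ℕ) (List.ofFn g)]
  congr 1
  rw [List.drop_eq_getElem_cons h0, List.drop_eq_getElem_cons h1]
  simp only [List.getElem_ofFn]
  congr 2
  exact congrArg g (Fin.ext hkk)

lemma take_ofFn_swap {m : ℕ} (g : Fin m → S) (k0 k1 : Fin m) (hkk : (k0 : ℕ) + 1 = k1) :
    (List.ofFn (g ∘ Equiv.swap k0 k1)).take k0 = (List.ofFn g).take k0 := by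
  apply List.ext_getElem (by simp)
  intro i hi _
  have hik : i < (k0 : ℕ) := by simpa using hi
  have him : i < m := lt_of_lt_of_le hik (le_of_lt k0.2)
  simp only [List.getElem_take, List.getElem_ofFn, Function.comp_apply]
  have : Equiv.swap k0 k1 ⟨i, him⟩ = ⟨i, him⟩ := by
    apply Equiv.swap_apply_of_ne_of_ne
    · exact fun h => absurd (congrArg Fin.val h) (by simp; omega)
    · exact fun h => absurd (congrArg Fin.val h) (by simp; omega)
  rw [this]

lemma drop_ofFn_swap {m : ℕ} (g : Fin m → S) (k0 k1 : Fin m) (hkk : (k0 : ℕ) + 1 = k1) :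
    (List.ofFn (g ∘ Equiv.swap k0 k1)).drop ((k0 : ℕ) + 2) =
      (List.ofFn g).drop ((k0 : ℕ) + 2) := by
  apply List.ext_getElem (by simp)
  intro i hi hi'
  have hlen : i < m - ((k0 : ℕ) + 2) := by simpa using hi'
  have him : (k0 : ℕ) + 2 + i < m := by omega
  simp only [List.getElem_drop, List.getElem_ofFn, Function.comp_apply]
  have : Equiv.swap k0 k1 ⟨(k0 : ℕ) + 2 + i, him⟩ = ⟨(k0 : ℕ) + 2 + i, him⟩ := by
    apply Equiv.swap_apply_of_ne_of_ne
    · exact fun h => absurd (congrArg Fin.val h) (by simp; omega)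
    · exact fun h => absurd (congrArg Fin.val h) (by simp; omega)
  rw [this]

lemma ofFn_swap_decomp {m : ℕ} (g : Fin m → S) (k0 k1 : Fin m) (hkk : (k0 : ℕ) + 1 = k1) :
    List.ofFn (g ∘ Equiv.swap k0 k1) =
      (List.ofFn g).take k0 ++ g k1 :: g k0 :: (List.ofFn g).drop ((k0 : ℕ) + 2) := by
  rw [ofFn_decomp (g ∘ Equiv.swap k0 k1) k0 k1 hkk, take_ofFn_swap g k0 k1 hkk,
    drop_ofFn_swap g k0 k1 hkk]
  simp [Equiv.swap_apply_left, Equiv.swap_apply_right]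

lemma swapStep_ofFn {m : ℕ} {g : Fin m → S} {k0 k1 : Fin m} (hkk : (k0 : ℕ) + 1 = k1)
    (hR : R (g k0) (g k1)) :
    SwapStep R (List.ofFn g) (List.ofFn (g ∘ Equiv.swap k0 k1)) :=
  ⟨(List.ofFn g).take k0, (List.ofFn g).drop ((k0 : ℕ) + 2), g k0, g k1, hR,
    ofFn_decomp g k0 k1 hkk, ofFn_swap_decomp g k0 k1 hkk⟩

/-- Swapping two adjacent values preserves being a linear extension, provided no
single heap step maps onto `(k0, k1)`. -/
lemma isExt_swap {m : ℕ} {w : Fin m → S} {e : Fin m ≃ Fin m} (he : IsExt R w e)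
    {k0 k1 : Fin m} (hkk : (k0 : ℕ) + 1 = k1)
    (hcond : ∀ r r', ((r : Fin m) ≤ r' ∧ (w r = w r' ∨ ¬ R (w r) (w r'))) →
      ¬(e r = k0 ∧ e r' = k1)) :
    IsExt R w (e.trans (Equiv.swap k0 k1)) := by
  intro p q hpq
  have hle : e p ≤ e q := he p q hpq
  have hno : ¬(e p = k0 ∧ e q = k1) := by
    rintro ⟨hp, hq⟩
    obtain ⟨r, r', hstep, hr, hr'⟩ := exists_step_pair he hkk hpq hp hq
    exact hcond r r' hstep ⟨hr, hr'⟩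
  exact swap_le_swap hkk hle hno


/-- The word of a linear extension. -/
noncomputable def wordOf {m : ℕ} (w : Fin m → S) (e : Fin m ≃ Fin m) : List S :=
  List.ofFn (w ∘ e.symm)

lemma wordOf_refl {m : ℕ} (w : Fin m → S) : wordOf w (Equiv.refl _) = List.ofFn w := rfl

/-- If a swap step is applied to the word of an extension, the result is again the word
of an extension. -/
lemma step_image (hirr : ∀ a, ¬ R a a) {m : ℕ} {w : Fin m → S} {e : Fin m ≃ Fin m}
    (he : IsExt R w e) {v : List S} (hv : SwapStep R (wordOf w e) v) :
    ∃ e', IsExt R w e' ∧ v = wordOf w e' := by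
  obtain ⟨x, y, a, b, hab, hu, hveq⟩ := hv
  set f : Fin m → S := w ∘ e.symm with hf
  have hlen : m = x.length + (y.length + 2) := by
    have := congrArg List.length hu
    simpa [wordOf] using this
  have hk1 : x.length + 1 < m := by omega
  set k0 : Fin m := ⟨x.length, by omega⟩ with hk0def
  set k1 : Fin m := ⟨x.length + 1, hk1⟩ with hk1def
  have hkk : (k0 : ℕ) + 1 = k1 := rfl
  have hdec := ofFn_decomp f k0 k1 hkk
  have hux : (List.ofFn f).take (k0 : ℕ) = x := by
    rw [show (List.ofFn f) = x ++ a :: b :: y from hu]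
    exact List.take_left
  have huy : (List.ofFn f).drop ((k0 : ℕ) + 2) = y := by
    rw [show (List.ofFn f) = x ++ a :: b :: y from hu]
    rw [show (k0 : ℕ) + 2 = x.length + 2 from rfl]
    rw [← List.drop_drop]
    rw [List.drop_left]
    rfl
  have hu' : List.ofFn f = x ++ a :: b :: y := hu
  have hcomp : x ++ a :: b :: y = x ++ f k0 :: f k1 :: y := by
    rw [← hu', hdec, hux, huy]
  have hab' := List.append_cancel_left hcomp
  have ha : a = f k0 := by injection hab'
  have hb : b = f k1 := by
    have := List.tail_eq_of_cons_eq hab'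
    injection this
  refine ⟨e.trans (Equiv.swap k0 k1), ?_, ?_⟩
  · apply isExt_swap he hkk
    rintro r r' hstep ⟨hr, hr'⟩
    have hwr : w r = a := by
      rw [ha, hf]
      simp only [Function.comp_apply]
      rw [← hr]; simp
    have hwr' : w r' = b := by
      rw [hb, hf]
      simp only [Function.comp_apply]
      rw [← hr']; simp
    rcases hstep.2 with h | h
    · rw [hwr, hwr'] at h
      exact hirr a (h ▸ hab)
    · rw [hwr, hwr'] at h
      exact h hab
  · rw [hveq]
    have : wordOf w (e.trans (Equiv.swap k0 k1)) = List.ofFn (f ∘ Equiv.swap k0 k1) := by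
      apply congrArg List.ofFn
      funext k
      simp [wordOf, hf, Equiv.symm_trans_apply]
    rw [this, ofFn_swap_decomp f k0 k1 hkk, hux, huy, ← ha, ← hb]

/-- every word in the commutation class of `List.ofFn w` is the word of an extension. -/
lemma class_subset_image (hirr : ∀ a, ¬ R a a) {m : ℕ} {w : Fin m → S} {u : List S}
    (h : Relation.ReflTransGen (SwapStep R) (List.ofFn w) u) :
    ∃ e, IsExt R w e ∧ u = wordOf w e := by
  induction h with
  | refl => exact ⟨Equiv.refl _, isExt_refl w, rfl⟩
  | tail _ hstep ih =>
    obtain ⟨e, he, rfl⟩ := ih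
    exact step_image hirr he hstep

/-- injectivity of `wordOf` on extensions. -/
lemma wordOf_injective {m : ℕ} {w : Fin m → S} {e f : Fin m ≃ Fin m}
    (he : IsExt R w e) (hf : IsExt R w f) (h : wordOf w e = wordOf w f) : e = f := by
  classical
  have hwf : w ∘ e.symm = w ∘ f.symm := List.ofFn_injective h
  by_contra hne
  have hsne : e.symm ≠ f.symm := fun hh => hne (by
    have := congrArg Equiv.symm hh
    simpa using this)
  set D : Finset (Fin m) := Finset.univ.filter (fun k => e.symm k ≠ f.symm k) with hD
  have hDne : D.Nonempty := by
    rcases Function.ne_iff.mp (fun hh => hsne (Equiv.ext (congrFun hh))) with ⟨k, hk⟩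
    · exact ⟨k, by simp [hD, hk]⟩
  set k : Fin m := D.min' hDne with hkdef
  have hkD : k ∈ D := Finset.min'_mem D hDne
  have hkne : e.symm k ≠ f.symm k := by simpa [hD] using hkD
  have hmin : ∀ l, l < k → e.symm l = f.symm l := by
    intro l hl
    by_contra hc
    exact absurd (Finset.min'_le D l (by simp [hD, hc])) (not_le.mpr hl)
  have hwij : w (e.symm k) = w (f.symm k) := congrFun hwf k
  have hfi : k < f (e.symm k) := by
    rcases lt_trichotomy (f (e.symm k)) k with hlt | heq | hgt
    · exfalso
      have h2 := hmin (f (e.symm k)) hlt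
      have h3 : f (e.symm k) = k := by
        have := congrArg e h2
        simp at this
        rw [this]
      omega
    · refine absurd ?_ hkne
      have := congrArg f.symm heq
      simpa using this
    · exact hgt
  have hej : k < e (f.symm k) := by
    rcases lt_trichotomy (e (f.symm k)) k with hlt | heq | hgt
    · exfalso
      have h2 := hmin (e (f.symm k)) hlt
      have h3 : e (f.symm k) = k := by
        have := congrArg f h2.symm
        simp at this
        rw [this]
      omega
    · refine absurd ?_ (Ne.symm hkne)
      have := congrArg e.symm heq
      simpa using this
    · exact hgt
  rcases lt_trichotomy (e.symm k) (f.symm k) with hij | heq | hji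
  · have hh : HeapLE R w (e.symm k) (f.symm k) :=
      Relation.ReflTransGen.single ⟨le_of_lt hij, Or.inl hwij⟩
    have := hf _ _ hh
    simp only [Equiv.apply_symm_apply] at this
    exact absurd this (not_le.mpr hfi)
  · exact hkne heq
  · have hh : HeapLE R w (f.symm k) (e.symm k) :=
      Relation.ReflTransGen.single ⟨le_of_lt hji, Or.inl hwij.symm⟩
    have := he _ _ hh
    simp only [Equiv.apply_symm_apply] at this
    exact absurd this (not_le.mpr hej)


/-- Number of inversions of a permutation of `Fin m`. -/
def invCount {m : ℕ} (e : Fin m ≃ Fin m) : ℕ :=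
  (Finset.univ.filter (fun p : Fin m × Fin m => p.1 < p.2 ∧ e p.2 < e p.1)).card

lemma exists_descent {m : ℕ} {e : Fin m ≃ Fin m} (hne : e ≠ Equiv.refl _) :
    ∃ k0 k1 : Fin m, (k0 : ℕ) + 1 = k1 ∧ e.symm k1 < e.symm k0 := by
  by_contra hc
  push_neg at hc
  have hadj : ∀ (i : ℕ) (h : i + 1 < m), e.symm ⟨i, by omega⟩ ≤ e.symm ⟨i + 1, h⟩ := by
    intro i h
    exact hc ⟨i, by omega⟩ ⟨i + 1, h⟩ rfl
  have hmono : Monotone e.symm := by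
    have key : ∀ (d : ℕ) (a : Fin m) (h : (a : ℕ) + d < m), e.symm a ≤ e.symm ⟨(a : ℕ) + d, h⟩ := by
      intro d
      induction d with
      | zero => intro a h; exact le_of_eq (congrArg e.symm (Fin.ext rfl))
      | succ d ih =>
        intro a h
        have h1 : (a : ℕ) + d < m := by omega
        exact le_trans (ih a h1) (hadj ((a : ℕ) + d) (by omega))
    intro a b hab
    have : b = ⟨(a : ℕ) + ((b : ℕ) - (a : ℕ)), by omega⟩ := Fin.ext (by simp; omega)
    rw [this]
    exact key _ a _
  have hsm : StrictMono e.symm := hmono.strictMono_of_injective e.symm.injective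
  have hsm' : StrictMono e := by
    intro a b hab
    rcases lt_trichotomy (e a) (e b) with h | h | h
    · exact h
    · exact absurd (e.injective h) (ne_of_lt hab)
    · exact absurd (hsm h) (not_lt.mpr (le_of_lt (by simpa using hab)))
  apply hne
  apply Equiv.ext
  intro i
  haveI hwf : WellFoundedLT (Fin m) := inferInstance
  have h1 : i ≤ e i := StrictMono.le_apply (hf := hsm')
  have h2 : e i ≤ i := by
    have h3 : i ≤ e.symm i := StrictMono.le_apply (hf := hsm)
    have := hsm'.monotone h3
    simpa using this
  simpa using le_antisymm h2 h1

lemma invCount_lt {m : ℕ} (e : Fin m ≃ Fin m) {k0 k1 : Fin m} (hkk : (k0 : ℕ) + 1 = k1)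
    (hdes : e.symm k1 < e.symm k0) :
    invCount (e.trans (Equiv.swap k0 k1)) < invCount e := by
  classical
  set i' : Fin m := e.symm k1
  set i : Fin m := e.symm k0
  have hii : i' < i := hdes
  have hei : e i = k0 := by simp [i]
  have hei' : e i' = k1 := by simp [i']
  have hk01 : k0 < k1 := by
    rw [Fin.lt_def]; omega
  have hmem : (i', i) ∈ Finset.univ.filter
      (fun p : Fin m × Fin m => p.1 < p.2 ∧ e p.2 < e p.1) := by
    simp only [Finset.mem_filter, Finset.mem_univ, true_and]
    exact ⟨hii, by rw [hei, hei']; exact hk01⟩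
  have hset : Finset.univ.filter
      (fun p : Fin m × Fin m => p.1 < p.2 ∧ (e.trans (Equiv.swap k0 k1)) p.2 <
        (e.trans (Equiv.swap k0 k1)) p.1) =
      (Finset.univ.filter
        (fun p : Fin m × Fin m => p.1 < p.2 ∧ e p.2 < e p.1)).erase (i', i) := by
    ext p
    obtain ⟨p1, p2⟩ := p
    simp only [Finset.mem_filter, Finset.mem_univ, true_and, Finset.mem_erase]
    simp only [Equiv.trans_apply]
    constructor
    · rintro ⟨hlt, hinv⟩
      have hne : (p1, p2) ≠ (i', i) := by
        rintro heqp
        have h1 : p1 = i' := (Prod.mk.injEq _ _ _ _ ▸ heqp).1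
        have h2 : p2 = i := (Prod.mk.injEq _ _ _ _ ▸ heqp).2
        rw [h1, h2, hei, hei'] at hinv
        rw [Equiv.swap_apply_left, Equiv.swap_apply_right] at hinv
        exact absurd hinv (not_lt.mpr (le_of_lt hk01))
      refine ⟨hne, hlt, ?_⟩
      have hc1 : ¬(e p2 = k0 ∧ e p1 = k1) := by
        rintro ⟨ha, hb⟩
        apply hne
        have : p2 = i := by rw [← hei] at ha; exact e.injective ha
        have h2 : p1 = i' := by rw [← hei'] at hb; exact e.injective hb
        rw [this, h2]
      have hc2 : ¬(e p2 = k1 ∧ e p1 = k0) := by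
        rintro ⟨ha, hb⟩
        have h1 : p2 = i' := by rw [← hei'] at ha; exact e.injective ha
        have h2 : p1 = i := by rw [← hei] at hb; exact e.injective hb
        rw [h1, h2] at hlt
        exact absurd hii (not_lt.mpr (le_of_lt hlt))
      exact (swap_lt_swap_iff hkk hc1 hc2).mp hinv
    · rintro ⟨hne, hlt, hinv⟩
      refine ⟨hlt, ?_⟩
      have hc1 : ¬(e p2 = k0 ∧ e p1 = k1) := by
        rintro ⟨ha, hb⟩
        apply hne
        have h1 : p2 = i := by rw [← hei] at ha; exact e.injective ha
        have h2 : p1 = i' := by rw [← hei'] at hb; exact e.injective hb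
        rw [h1, h2]
      have hc2 : ¬(e p2 = k1 ∧ e p1 = k0) := by
        rintro ⟨ha, hb⟩
        have h1 : p2 = i' := by rw [← hei'] at ha; exact e.injective ha
        have h2 : p1 = i := by rw [← hei] at hb; exact e.injective hb
        rw [h1, h2] at hlt
        exact absurd hii (not_lt.mpr (le_of_lt hlt))
      exact (swap_lt_swap_iff hkk hc1 hc2).mpr hinv
  unfold invCount
  rw [hset]
  exact Finset.card_erase_lt_of_mem hmem


/-- The word of every extension lies in the commutation class of `List.ofFn w`. -/
lemma image_subset_class (hs : ∀ a b, R a b → R b a) {m : ℕ} {w : Fin m → S} :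
    ∀ (N : ℕ) (e : Fin m ≃ Fin m), invCount e = N → IsExt R w e →
      Relation.ReflTransGen (SwapStep R) (List.ofFn w) (wordOf w e) := by
  intro N
  induction N using Nat.strong_induction_on with
  | _ N ih =>
    intro e hN he
    by_cases h1 : e = Equiv.refl _
    · subst h1
      rw [wordOf_refl]
    · obtain ⟨k0, k1, hkk, hdes⟩ := exists_descent h1
      set e' : Fin m ≃ Fin m := e.trans (Equiv.swap k0 k1) with he'def
      have hdec : invCount e' < N := hN ▸ invCount_lt e hkk hdes
      have hcond : ∀ r r', ((r : Fin m) ≤ r' ∧ (w r = w r' ∨ ¬ R (w r) (w r'))) →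
          ¬(e r = k0 ∧ e r' = k1) := by
        rintro r r' hstep ⟨hr, hr'⟩
        have h2 : r = e.symm k0 := by rw [← hr]; simp
        have h3 : r' = e.symm k1 := by rw [← hr']; simp
        rw [h2, h3] at hstep
        exact absurd hstep.1 (not_le.mpr hdes)
      have he' : IsExt R w e' := isExt_swap he hkk hcond
      have hchain := ih _ hdec e' rfl he'
      -- one swap step from the word of `e'` to the word of `e`
      have hnostep : ¬((e.symm k1 : Fin m) ≤ e.symm k0 ∧
          (w (e.symm k1) = w (e.symm k0) ∨ ¬ R (w (e.symm k1)) (w (e.symm k0)))) := by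
        rintro hstep
        have hheap : HeapLE R w (e.symm k1) (e.symm k0) := Relation.ReflTransGen.single hstep
        have := he _ _ hheap
        simp only [Equiv.apply_symm_apply] at this
        have : (k1 : ℕ) ≤ k0 := this
        omega
      push_neg at hnostep
      have hR : R (w (e.symm k1)) (w (e.symm k0)) :=
        (hnostep (le_of_lt hdes)).2
      set f : Fin m → S := w ∘ e'.symm with hfdef
      have hfk0 : f k0 = w (e.symm k1) := by
        simp only [hfdef, he'def, Function.comp_apply, Equiv.symm_trans_apply]
        rw [Equiv.symm_swap, Equiv.swap_apply_left]
      have hfk1 : f k1 = w (e.symm k0) := by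
        simp only [hfdef, he'def, Function.comp_apply, Equiv.symm_trans_apply]
        rw [Equiv.symm_swap, Equiv.swap_apply_right]
      have hstep : SwapStep R (wordOf w e') (wordOf w e) := by
        have h4 : wordOf w e = List.ofFn (f ∘ Equiv.swap k0 k1) := by
          apply congrArg List.ofFn
          funext k
          simp only [wordOf, hfdef, he'def, Function.comp_apply, Equiv.symm_trans_apply,
            Equiv.symm_swap, Equiv.swap_apply_self]
        rw [h4]
        exact swapStep_ofFn hkk (by show R (f k0) (f k1); rw [hfk0, hfk1]; exact hR)
      exact hchain.tail hstep

/-- The commutation class of `List.ofFn w` is in bijection with the linear extensions. -/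
noncomputable def classEquivExt (hs : ∀ a b, R a b → R b a) (hirr : ∀ a, ¬ R a a)
    {m : ℕ} (w : Fin m → S) :
    {e : Fin m ≃ Fin m // IsExt R w e} ≃
      {u : List S // Relation.ReflTransGen (SwapStep R) (List.ofFn w) u} := by
  apply Equiv.ofBijective
    (fun e => ⟨wordOf w e.1, image_subset_class hs _ e.1 rfl e.2⟩)
  constructor
  · rintro ⟨e, he⟩ ⟨f, hf⟩ h
    simp only [Subtype.mk.injEq] at h
    exact Subtype.ext (wordOf_injective he hf h)
  · rintro ⟨u, hu⟩
    obtain ⟨e, he, rfl⟩ := class_subset_image hirr hu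
    exact ⟨⟨e, he⟩, rfl⟩

lemma extFinite {m : ℕ} (w : Fin m → S) : Finite {e : Fin m ≃ Fin m // IsExt R w e} :=
  Subtype.finite

lemma extNonempty {m : ℕ} (w : Fin m → S) : Nonempty {e : Fin m ≃ Fin m // IsExt R w e} :=
  ⟨⟨Equiv.refl _, isExt_refl w⟩⟩


lemma eqvGen_to_reflTransGen {α : Type*} {r : α → α → Prop} (hsym : Symmetric r)
    {a b : α} (h : Relation.EqvGen r a b) : Relation.ReflTransGen r a b := by
  induction h with
  | rel x y hxy => exact Relation.ReflTransGen.single hxy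
  | refl x => exact Relation.ReflTransGen.refl
  | symm x y hxy ih => exact (@Relation.ReflTransGen.symmetric _ _ ⟨hsym⟩).symm _ _ ih
  | trans x y z hxy hyz ih1 ih2 => exact ih1.trans ih2

/-- General counting lemma: the number of words satisfying a swap-invariant predicate
equals the sum over commutation classes of the numbers of linear extensions. -/
lemma card_eq_finsum {S : Type*} {R : S → S → Prop}
    (hs : ∀ a b, R a b → R b a) (hirr : ∀ a, ¬ R a a) (P : List S → Prop)
    (hpres : ∀ u v, SwapStep R u v → P u → P v)
    (E : Quot (fun u v : {l : List S // P l} => SwapStep R u.1 v.1) → ℕ)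
    (hExt : ∀ t : {l : List S // P l}, E (Quot.mk _ t) =
      Nat.card {e : Fin t.1.length ≃ Fin t.1.length // IsExt R t.1.get e}) :
    Nat.card {l : List S // P l} = ∑ᶠ c, E c := by
  classical
  have hsym : Symmetric (SwapStep R) := fun u v h => swapStep_symm hs h
  have hmemT : ∀ (t0 : {l : List S // P l}) (l : List S),
      Relation.ReflTransGen (SwapStep R) t0.1 l → P l := by
    intro t0 l h
    induction h with
    | refl => exact t0.2
    | tail _ hstep ih => exact hpres _ _ hstep ih
  have hlift : ∀ (t0 : {l : List S // P l}) (l : List S) (hm : P l),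
      Relation.ReflTransGen (SwapStep R) t0.1 l →
      Quot.mk (fun u v : {l : List S // P l} => SwapStep R u.1 v.1) ⟨l, hm⟩ =
        Quot.mk _ t0 := by
    intro t0 l hm h
    revert hm
    induction h with
    | refl => intro hm; exact congrArg (Quot.mk _) (Subtype.ext rfl)
    | @tail c l hch hstep ih =>
      intro hm
      have h1 : Quot.mk (fun u v : {l : List S // P l} => SwapStep R u.1 v.1)
          (⟨c, hmemT t0 c hch⟩ : {l : List S // P l}) = Quot.mk _ ⟨l, hm⟩ :=
        Quot.sound hstep
      exact h1.symm.trans (ih (hmemT t0 c hch))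
  have hfibEquiv : ∀ t0 : {l : List S // P l},
      Nonempty ({u : {l : List S // P l} // Quot.mk _ u = Quot.mk
          (fun u v : {l : List S // P l} => SwapStep R u.1 v.1) t0} ≃
        {e : Fin t0.1.length ≃ Fin t0.1.length // IsExt R t0.1.get e}) := by
    intro t0
    have chain_of : ∀ u : {l : List S // P l}, Quot.mk _ u = Quot.mk
        (fun u v : {l : List S // P l} => SwapStep R u.1 v.1) t0 →
        Relation.ReflTransGen (SwapStep R) t0.1 u.1 := by
      intro u hq
      have h1 : Relation.EqvGen (fun u v : {l : List S // P l} => SwapStep R u.1 v.1) u t0 :=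
        Quot.eq.mp hq
      clear hq
      have h2 : Relation.EqvGen (SwapStep R) u.1 t0.1 := by
        induction h1 with
        | rel x y hxy => exact Relation.EqvGen.rel _ _ hxy
        | refl x => exact Relation.EqvGen.refl _
        | symm x y _ ih => exact Relation.EqvGen.symm _ _ ih
        | trans x y z _ _ ih1 ih2 => exact Relation.EqvGen.trans _ _ _ ih1 ih2
      exact eqvGen_to_reflTransGen hsym (Relation.EqvGen.symm _ _ h2)
    have e1 : {u : {l : List S // P l} // Quot.mk _ u = Quot.mk
        (fun u v : {l : List S // P l} => SwapStep R u.1 v.1) t0} ≃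
        {l : List S // Relation.ReflTransGen (SwapStep R) t0.1 l} :=
      { toFun := fun u => ⟨u.1.1, chain_of u.1 u.2⟩
        invFun := fun l => ⟨⟨l.1, hmemT t0 l.1 l.2⟩, hlift t0 l.1 _ l.2⟩
        left_inv := fun u => Subtype.ext (Subtype.ext rfl)
        right_inv := fun l => Subtype.ext rfl }
    have hofn : List.ofFn t0.1.get = t0.1 := List.ofFn_get t0.1
    have e2 : {l : List S // Relation.ReflTransGen (SwapStep R) t0.1 l} ≃
        {l : List S // Relation.ReflTransGen (SwapStep R) (List.ofFn t0.1.get) l} :=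
      Equiv.subtypeEquivRight (fun l => by rw [hofn])
    exact ⟨(e1.trans e2).trans (classEquivExt hs hirr t0.1.get).symm⟩
  have hfibCard : ∀ t0 : {l : List S // P l},
      Nat.card {u : {l : List S // P l} // Quot.mk _ u = Quot.mk
        (fun u v : {l : List S // P l} => SwapStep R u.1 v.1) t0} = E (Quot.mk _ t0) := by
    intro t0
    obtain ⟨eq⟩ := hfibEquiv t0
    rw [Nat.card_congr eq, hExt t0]
  have hfibFin : ∀ t0 : {l : List S // P l},
      Finite {u : {l : List S // P l} // Quot.mk _ u = Quot.mk
        (fun u v : {l : List S // P l} => SwapStep R u.1 v.1) t0} := by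
    intro t0
    obtain ⟨eq⟩ := hfibEquiv t0
    exact Finite.of_equiv _ eq.symm
  have hEpos : ∀ c, 0 < E c := by
    intro c
    obtain ⟨t0, rfl⟩ := Quot.exists_rep c
    rw [← hfibCard t0]
    haveI := hfibFin t0
    haveI : Nonempty {u : {l : List S // P l} // Quot.mk _ u = Quot.mk
        (fun u v : {l : List S // P l} => SwapStep R u.1 v.1) t0} := ⟨⟨t0, rfl⟩⟩
    exact Nat.card_pos
  rcases finite_or_infinite
      (Quot (fun u v : {l : List S // P l} => SwapStep R u.1 v.1)) with hQ | hQ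
  · haveI hcf : ∀ c, Finite {u : {l : List S // P l} // Quot.mk
        (fun u v : {l : List S // P l} => SwapStep R u.1 v.1) u = c} := by
      intro c
      obtain ⟨t0, rfl⟩ := Quot.exists_rep c
      exact hfibFin t0
    haveI : Finite {l : List S // P l} := Finite.of_equiv _
      (Equiv.sigmaFiberEquiv
        (Quot.mk (fun u v : {l : List S // P l} => SwapStep R u.1 v.1)))
    haveI : Fintype (Quot (fun u v : {l : List S // P l} => SwapStep R u.1 v.1)) :=
      Fintype.ofFinite _
    haveI : ∀ c, Fintype {u : {l : List S // P l} // Quot.mk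
        (fun u v : {l : List S // P l} => SwapStep R u.1 v.1) u = c} :=
      fun c => Fintype.ofFinite _
    haveI : Fintype {l : List S // P l} := Fintype.ofFinite _
    rw [finsum_eq_sum_of_fintype, Nat.card_eq_fintype_card,
      ← Fintype.card_congr (Equiv.sigmaFiberEquiv
        (Quot.mk (fun u v : {l : List S // P l} => SwapStep R u.1 v.1))),
      Fintype.card_sigma]
    apply Finset.sum_congr rfl
    intro c _
    obtain ⟨t0, rfl⟩ := Quot.exists_rep c
    rw [← Nat.card_eq_fintype_card, hfibCard t0]
  · haveI : Infinite {l : List S // P l} := by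
      by_contra hfin
      rw [not_infinite_iff_finite] at hfin
      haveI := hfin
      haveI : Finite (Quot (fun u v : {l : List S // P l} => SwapStep R u.1 v.1)) :=
        Finite.of_surjective (Quot.mk _) Quot.mk_surjective
      exact absurd this (by rw [← not_infinite_iff_finite]; exact fun h => h hQ)
    rw [Nat.card_eq_zero_of_infinite]
    have hsupp : Function.support E = Set.univ :=
      Set.eq_univ_of_forall (fun c => (hEpos c).ne')
    rw [finsum_of_infinite_support]
    rw [hsupp]
    exact Set.infinite_univ

end Stmt12Aux

open Stmt12Aux in
/-- The number of reduced words for `w` equals the sum, over the commutation classes of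
reduced words for `w` (i.e. over the corresponding word posets `P ∈ WP(w)`), of the
number `E(P)` of linear extensions of `P`. -/
theorem stmt12 {B : Type*} {W : Type*} [Group W] {M : CoxeterMatrix B}
    (cs : CoxeterSystem M W) (w : W)
    (E : Quot (fun u v : {ω : List B // cs.wordProd ω = w ∧ cs.IsReduced ω} =>
          SwapStep (fun a b => M a b = 2) u.1 v.1) → ℕ)
    (hE : ∀ ω : {ω : List B // cs.wordProd ω = w ∧ cs.IsReduced ω},
        E (Quot.mk _ ω) = ExtCount M ω.1) :
    Nat.card {ω : List B // cs.wordProd ω = w ∧ cs.IsReduced ω} = ∑ᶠ c, E c := by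
  have hs : ∀ a b : B, M a b = 2 → M b a = 2 := fun a b h => by
    rw [← M.symmetric]; exact h
  have hirr : ∀ a : B, ¬ (M a a = 2) := fun a h => by
    rw [M.diagonal a] at h; omega
  refine card_eq_finsum hs hirr _ ?_ E ?_
  · rintro u v ⟨x, y, a, b, hab, rfl, rfl⟩ hP
    have hcomm : cs.simple a * cs.simple b = cs.simple b * cs.simple a := by
      have h2 := cs.simple_mul_simple_pow a b
      rw [hab] at h2
      have h3 : (cs.simple a * cs.simple b) * (cs.simple a * cs.simple b) = 1 := by
        rw [← pow_two]; exact h2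
      calc cs.simple a * cs.simple b = (cs.simple a * cs.simple b)⁻¹ :=
            (inv_eq_of_mul_eq_one_right h3).symm
        _ = (cs.simple b)⁻¹ * (cs.simple a)⁻¹ := by rw [mul_inv_rev]
        _ = cs.simple b * cs.simple a := by rw [cs.inv_simple, cs.inv_simple]
    have hprod : cs.wordProd (x ++ a :: b :: y) = cs.wordProd (x ++ b :: a :: y) := by
      simp only [cs.wordProd_append, cs.wordProd_cons]
      rw [← mul_assoc (cs.simple a), ← mul_assoc (cs.simple b), hcomm]
    refine ⟨by rw [← hprod]; exact hP.1, ?_⟩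
    show cs.length (cs.wordProd _) = _
    rw [← hprod]
    have hlen : (x ++ a :: b :: y).length = (x ++ b :: a :: y).length := by simp
    rw [← hlen]
    exact hP.2
  · intro t
    rw [hE t]
    rfl
end
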